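/- arXiv:1204.4251 — 3 statements merged into one kernel-verified Lean document; each statement's English description precedes it below -/
import Mathlib

section
/- For every n ≥ 4, the augmented cube AQ_n is (2n−1)-connected; that is, its vertex connectivity equals 2n−1. -/
/-- Flip the single bit at index `i` (paper bit `i+1`), i.e. the map `X ↦ X_{i+1}`. -/
def flipBit {n : ℕ} (i : Fin n) (X : Fin n → Bool) : Fin n → Bool :=
  fun j => if j = i then !(X j) else X j

/-- Flip all bits at indices `≤ i` (paper bits `i+1, i, …, 1`), i.e. the map `X ↦ X̄_{i+1}`. -/
def flipDown {n : ℕ} (i : Fin n) (X : Fin n → Bool) : Fin n → Bool :=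
  fun j => if j ≤ i then !(X j) else X j

lemma flipBit_flipBit {n : ℕ} (i : Fin n) (X : Fin n → Bool) :
    flipBit i (flipBit i X) = X := by
  funext j; by_cases h : j = i <;> simp [flipBit, h]

lemma flipDown_flipDown {n : ℕ} (i : Fin n) (X : Fin n → Bool) :
    flipDown i (flipDown i X) = X := by
  funext j; by_cases h : j ≤ i <;> simp [flipDown, h]

/-- The augmented cube `AQ_n`: vertices are `n`-bit strings; two distinct vertices `X, Y`
are adjacent iff `Y = X_i` for some `1 ≤ i ≤ n` (a hypercube edge) or `Y = X̄_i` for some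
`2 ≤ i ≤ n` (a complement edge).  Paper bit `i` corresponds to index `i - 1 : Fin n`. -/
def augCube (n : ℕ) : SimpleGraph (Fin n → Bool) where
  Adj X Y := X ≠ Y ∧
    ((∃ i : Fin n, Y = flipBit i X) ∨ (∃ i : Fin n, 1 ≤ i.val ∧ Y = flipDown i X))
  symm := by
    constructor
    rintro X Y ⟨hne, h⟩
    refine ⟨hne.symm, ?_⟩
    rcases h with ⟨i, rfl⟩ | ⟨i, hi, rfl⟩
    · exact Or.inl ⟨i, (flipBit_flipBit i X).symm⟩
    · exact Or.inr ⟨i, hi, (flipDown_flipDown i X).symm⟩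
  loopless := ⟨fun X h => h.1 rfl⟩


namespace AQaux

def cmpl {n : ℕ} (X : Fin n → Bool) : Fin n → Bool := fun i => !(X i)

/-- Reachability in `G` avoiding the set `S`. -/
def Avoid {V : Type*} (G : SimpleGraph V) (S : Set V) : V → V → Prop :=
  Relation.ReflTransGen (fun a b => G.Adj a b ∧ a ∉ S ∧ b ∉ S)

lemma Avoid.symm {V : Type*} {G : SimpleGraph V} {S : Set V} {x y : V}
    (h : Avoid G S x y) : Avoid G S y x :=
  by
    haveI : Std.Symm (fun a b => G.Adj a b ∧ a ∉ S ∧ b ∉ S) :=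
      ⟨fun _ _ ⟨h1, h2, h3⟩ => ⟨h1.symm, h3, h2⟩⟩
    exact (Relation.ReflTransGen.stdSymm (r := fun a b => G.Adj a b ∧ a ∉ S ∧ b ∉ S)).symm _ _ h

lemma Avoid.trans {V : Type*} {G : SimpleGraph V} {S : Set V} {x y z : V}
    (h : Avoid G S x y) (h' : Avoid G S y z) : Avoid G S x z :=
  Relation.ReflTransGen.trans h h'

lemma Avoid.rfl {V : Type*} {G : SimpleGraph V} {S : Set V} {x : V} : Avoid G S x x :=
  Relation.ReflTransGen.refl

lemma avoid_step {V : Type*} {G : SimpleGraph V} {S : Set V} {x y : V}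
    (h : G.Adj x y) (hx : x ∉ S) (hy : y ∉ S) : Avoid G S x y :=
  Relation.ReflTransGen.single ⟨h, hx, hy⟩

lemma avoid_reachable {V : Type*} {G : SimpleGraph V} {S : Set V} {x y : V}
    (h : Avoid G S x y) (hx : x ∈ Sᶜ) :
    ∀ hy : y ∈ Sᶜ, (G.induce Sᶜ).Reachable ⟨x, hx⟩ ⟨y, hy⟩ := by
  induction h with
  | refl => exact fun _ => SimpleGraph.Reachable.refl _
  | tail _ step ih =>
    intro hy
    exact (ih step.2.1).trans (SimpleGraph.Adj.reachable (by exact step.1))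

-- snoc lifting
open Fin

lemma adj_snoc {m : ℕ} (b : Bool) {X Y : Fin m → Bool} (h : (augCube m).Adj X Y) :
    (augCube (m+1)).Adj (snoc X b) (snoc Y b) := by
  obtain ⟨hne, h⟩ := h
  constructor
  · intro hXY
    exact hne (funext fun i => by
      have := congrFun hXY (castSucc i); simpa using this)
  rcases h with ⟨i, rfl⟩ | ⟨i, hi, rfl⟩
  · refine Or.inl ⟨castSucc i, funext fun j => ?_⟩
    refine Fin.lastCases ?_ (fun k => ?_) j
    · simp [flipBit, (Fin.castSucc_lt_last i).ne']
    · by_cases hk : k = i <;> simp [flipBit, hk, Fin.castSucc_inj]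
  · refine Or.inr ⟨castSucc i, by simpa using hi, funext fun j => ?_⟩
    refine Fin.lastCases ?_ (fun k => ?_) j
    · simp [flipDown, (Fin.castSucc_lt_last i).not_ge]
    · by_cases hk : k ≤ i <;> simp [flipDown, hk, Fin.castSucc_le_castSucc_iff]

lemma adj_cross1 {m : ℕ} (b : Bool) (X : Fin m → Bool) :
    (augCube (m+1)).Adj (snoc X b) (snoc X (!b)) := by
  constructor
  · intro h
    have := congrFun h (Fin.last m)
    simp at this
  refine Or.inl ⟨Fin.last m, funext fun j => ?_⟩
  refine Fin.lastCases ?_ (fun k => ?_) j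
  · simp [flipBit]
  · simp [flipBit, (Fin.castSucc_lt_last k).ne]

lemma adj_cross2 {m : ℕ} (hm : 1 ≤ m) (b : Bool) (X : Fin m → Bool) :
    (augCube (m+1)).Adj (snoc X b) (snoc (cmpl X) (!b)) := by
  constructor
  · intro h
    have := congrFun h (Fin.last m)
    simp at this
  refine Or.inr ⟨Fin.last m, by simpa using hm, funext fun j => ?_⟩
  refine Fin.lastCases ?_ (fun k => ?_) j
  · simp [flipDown]
  · simp [flipDown, Fin.le_last, cmpl]

lemma snoc_injective {m : ℕ} (b : Bool) : Function.Injective (fun X : Fin m → Bool => Fin.snoc X b : _ → Fin (m+1) → Bool) := by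
  intro X Y h
  have := congrArg Fin.init h
  simpa using this

lemma avoid_snoc {m : ℕ} (b : Bool) (S : Set (Fin (m+1) → Bool)) {X Y : Fin m → Bool}
    (h : Avoid (augCube m) {Z | Fin.snoc Z b ∈ S} X Y) :
    Avoid (augCube (m+1)) S (Fin.snoc X b) (Fin.snoc Y b) := by
  induction h with
  | refl => exact Avoid.rfl
  | tail _ step ih =>
    exact ih.trans (avoid_step (adj_snoc b step.1) step.2.1 step.2.2)

end AQaux

namespace AQaux
open Fin

def side {m : ℕ} (b : Bool) : Set (Fin (m+1) → Bool) := {v | v (Fin.last m) = b}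

lemma ncard_sub_le {m : ℕ} (b : Bool) (S : Set (Fin (m+1) → Bool)) :
    {Z : Fin m → Bool | Fin.snoc Z b ∈ S}.ncard ≤ (S ∩ side b).ncard := by
  have himg : (fun Z : Fin m → Bool => (Fin.snoc Z b : Fin (m+1) → Bool)) ''
      {Z | Fin.snoc Z b ∈ S} ⊆ S ∩ side b := by
    rintro v ⟨Z, hZ, rfl⟩
    exact ⟨hZ, by simp [side]⟩
  calc {Z : Fin m → Bool | Fin.snoc Z b ∈ S}.ncard
      = ((fun Z : Fin m → Bool => (Fin.snoc Z b : Fin (m+1) → Bool)) ''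
          {Z | Fin.snoc Z b ∈ S}).ncard :=
        (Set.ncard_image_of_injective _ (snoc_injective b)).symm
    _ ≤ (S ∩ side b).ncard := Set.ncard_le_ncard himg (Set.toFinite _)

lemma ncard_split {m : ℕ} (S : Set (Fin (m+1) → Bool)) :
    (S ∩ side false).ncard + (S ∩ side true).ncard = S.ncard := by
  rw [← Set.ncard_union_eq]
  · congr 1
    ext v
    constructor
    · rintro (⟨h, _⟩ | ⟨h, _⟩) <;> exact h
    · intro hv
      by_cases h : v (Fin.last m) = false
      · exact Or.inl ⟨hv, h⟩
      · exact Or.inr ⟨hv, by simpa [side] using h⟩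
  · rw [Set.disjoint_iff_inter_eq_empty]
    ext v
    simp only [Set.mem_inter_iff, Set.mem_empty_iff_false, iff_false]
    rintro ⟨⟨_, h1⟩, ⟨_, h2⟩⟩
    rw [side] at h1 h2
    simp_all

lemma exists_cross {m : ℕ} (S : Set (Fin (m+1) → Bool)) (hS : S.ncard < 2 ^ m) :
    ∃ Z : Fin m → Bool, Fin.snoc Z false ∉ S ∧ Fin.snoc Z true ∉ S := by
  by_contra h
  push_neg at h
  have hsub : (Set.univ : Set (Fin m → Bool)) ⊆ Fin.init '' S := by
    intro Z _
    rcases Classical.em (Fin.snoc Z false ∈ S) with hf | hf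
    · exact ⟨Fin.snoc Z false, hf, by simp⟩
    · exact ⟨Fin.snoc Z true, h Z hf, by simp⟩
  have h1 : (Set.univ : Set (Fin m → Bool)).ncard ≤ (Fin.init '' S).ncard :=
    Set.ncard_le_ncard hsub (Set.toFinite _)
  have h2 : (Fin.init '' S).ncard ≤ S.ncard := Set.ncard_image_le (Set.toFinite _)
  have h3 : (Set.univ : Set (Fin m → Bool)).ncard = 2 ^ m := by
    rw [Set.ncard_univ, Nat.card_eq_fintype_card]
    simp
  omega

lemma assemble {m : ℕ} (S : Set (Fin (m+1) → Bool)) (b : Bool)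
    (hhalf : ∀ X Y : Fin m → Bool, Fin.snoc X b ∉ S → Fin.snoc Y b ∉ S →
      Avoid (augCube (m+1)) S (Fin.snoc X b) (Fin.snoc Y b))
    (hroute : ∀ u, u (Fin.last m) ≠ b → u ∉ S →
      ∃ Z, Fin.snoc Z b ∉ S ∧ Avoid (augCube (m+1)) S u (Fin.snoc Z b)) :
    ∀ x ∉ S, ∀ y ∉ S, Avoid (augCube (m+1)) S x y := by
  have key : ∀ x ∉ S, ∃ Z, Fin.snoc Z b ∉ S ∧ Avoid (augCube (m+1)) S x (Fin.snoc Z b) := by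
    intro x hx
    by_cases hxb : x (Fin.last m) = b
    · refine ⟨Fin.init x, ?_, ?_⟩
      · rw [← hxb, Fin.snoc_init_self]; exact hx
      · rw [← hxb, Fin.snoc_init_self]
        exact Avoid.rfl
    · exact hroute x hxb hx
  intro x hx y hy
  obtain ⟨Zx, hZx, hax⟩ := key x hx
  obtain ⟨Zy, hZy, hay⟩ := key y hy
  exact (hax.trans (hhalf Zx Zy hZx hZy)).trans hay.symm

end AQaux

namespace AQaux
open Fin

instance (n : ℕ) : DecidableRel (augCube n).Adj := fun X Y => by
  unfold augCube; simp only; infer_instance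

def thr : ℕ → ℕ := fun m => if m = 2 then 4 else if m = 3 then 3 else 2 * m - 2

lemma aq2_complete : ∀ X Y : Fin 2 → Bool, X ≠ Y → (augCube 2).Adj X Y := by decide

lemma aq3_facts : ∀ X : Fin 3 → Bool,
    (augCube 3).Adj X (flipBit 0 X) ∧ (augCube 3).Adj X (flipBit 1 X) ∧
    (augCube 3).Adj X (flipBit 2 X) ∧ (augCube 3).Adj X (flipDown 1 X) ∧
    (augCube 3).Adj X (cmpl X) ∧
    flipBit 0 X ≠ flipBit 1 X ∧ flipBit 0 X ≠ flipBit 2 X ∧ flipBit 0 X ≠ flipDown 1 X ∧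
    flipBit 0 X ≠ cmpl X ∧ flipBit 1 X ≠ flipBit 2 X ∧ flipBit 1 X ≠ flipDown 1 X ∧
    flipBit 1 X ≠ cmpl X ∧ flipBit 2 X ≠ flipDown 1 X ∧ flipBit 2 X ≠ cmpl X ∧
    flipDown 1 X ≠ cmpl X := by decide

lemma aq3_F2 : ∀ X : Fin 3 → Bool, ∃ Y : Fin 3 → Bool,
    (augCube 3).Adj (cmpl X) Y ∧ Y ≠ flipBit 0 X ∧ Y ≠ flipBit 1 X ∧ Y ≠ flipBit 2 X ∧
    Y ≠ flipDown 1 X ∧ Y ≠ X ∧ Y ≠ cmpl X := by decide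

lemma snoc_init_eq {m : ℕ} {u : Fin (m+1) → Bool} {b : Bool} (h : u (Fin.last m) = b) :
    (Fin.snoc (Fin.init u) b : Fin (m+1) → Bool) = u := by
  rw [← h, Fin.snoc_init_self]

lemma caseEasy {m : ℕ} (S : Set (Fin (m+1) → Bool))
    (hIH : ∀ S' : Set (Fin m → Bool), S'.ncard ≤ thr m → ∀ x ∉ S', ∀ y ∉ S',
      Avoid (augCube m) S' x y)
    (hf : {Z : Fin m → Bool | Fin.snoc Z false ∈ S}.ncard ≤ thr m)
    (ht : {Z : Fin m → Bool | Fin.snoc Z true ∈ S}.ncard ≤ thr m)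
    (hcross : S.ncard < 2 ^ m) :
    ∀ x ∉ S, ∀ y ∉ S, Avoid (augCube (m+1)) S x y := by
  obtain ⟨Z, hZf, hZt⟩ := exists_cross S hcross
  apply assemble S false
  · intro X Y hX hY
    exact avoid_snoc false S (hIH _ hf X hX Y hY)
  · intro u hub hu
    have hut : u (Fin.last m) = true := by cases hv : u (Fin.last m) <;> simp_all
    have hu' := snoc_init_eq hut
    refine ⟨Z, hZf, ?_⟩
    have h1 : Avoid (augCube (m+1)) S u (Fin.snoc Z true) := by
      have := avoid_snoc true S (hIH _ ht (Fin.init u) (fun hmem => hu (hu' ▸ hmem)) Z hZt)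
      rwa [hu'] at this
    exact h1.trans (avoid_step (adj_cross1 true Z) hZt hZf)

lemma caseMed {m : ℕ} (hm : 2 ≤ m) (S : Set (Fin (m+1) → Bool)) (a : Bool)
    (hIH : ∀ S' : Set (Fin m → Bool), S'.ncard ≤ thr m → ∀ x ∉ S', ∀ y ∉ S',
      Avoid (augCube m) S' x y)
    (hthr : 1 ≤ thr m)
    (hsmall : (S ∩ side (!a)).ncard ≤ 1) :
    ∀ x ∉ S, ∀ y ∉ S, Avoid (augCube (m+1)) S x y := by
  apply assemble S (!a)
  · intro X Y hX hY
    exact avoid_snoc (!a) S (hIH _ (le_trans (le_trans (ncard_sub_le (!a) S) hsmall) hthr) X hX Y hY)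
  · intro u hub hu
    have hua : u (Fin.last m) = a := by cases a <;> cases hv : u (Fin.last m) <;> simp_all
    have hu' := snoc_init_eq hua
    set X := Fin.init u with hXdef
    by_cases h1 : (Fin.snoc X (!a) : Fin (m+1) → Bool) ∈ S
    · by_cases h2 : (Fin.snoc (cmpl X) (!a) : Fin (m+1) → Bool) ∈ S
      · exfalso
        have hne : (Fin.snoc X (!a) : Fin (m+1) → Bool) ≠ Fin.snoc (cmpl X) (!a) := by
          intro h
          have := congrFun h (Fin.castSucc ⟨0, by omega⟩)
          simp only [Fin.snoc_castSucc, cmpl] at this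
          simp at this
        have hsub2 : ({Fin.snoc X (!a), Fin.snoc (cmpl X) (!a)} : Set (Fin (m+1) → Bool)) ⊆
            S ∩ side (!a) := by
          rintro v hv
          simp only [Set.mem_insert_iff, Set.mem_singleton_iff] at hv
          rcases hv with rfl | rfl
          · exact ⟨h1, by simp [side]⟩
          · exact ⟨h2, by simp [side]⟩
        have := Set.ncard_le_ncard hsub2 (Set.toFinite _)
        rw [Set.ncard_pair hne] at this
        omega
      · exact ⟨cmpl X, h2, avoid_step (hu' ▸ adj_cross2 (by omega) a X) hu h2⟩
    · exact ⟨X, h1, avoid_step (hu' ▸ adj_cross1 a X) hu h1⟩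

end AQaux

namespace AQaux
open Fin

lemma caseHard (S : Set (Fin (3+1) → Bool)) (a : Bool)
    (hIH : ∀ S' : Set (Fin 3 → Bool), S'.ncard ≤ thr 3 → ∀ x ∉ S', ∀ y ∉ S',
      Avoid (augCube 3) S' x y)
    (hS : S.ncard ≤ 6)
    (hsmall : (S ∩ side (!a)).ncard ≤ 2) :
    ∀ x ∉ S, ∀ y ∉ S, Avoid (augCube (3+1)) S x y := by
  apply assemble S (!a)
  · intro X Y hX hY
    refine avoid_snoc (!a) S (hIH _ ?_ X hX Y hY)
    exact le_trans (le_trans (ncard_sub_le (!a) S) hsmall) (by norm_num [thr])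
  · intro u hub hu
    have hua : u (Fin.last 3) = a := by cases a <;> cases hv : u (Fin.last 3) <;> simp_all
    have hu' := snoc_init_eq hua
    set X := Fin.init u with hXdef
    by_cases h1 : (Fin.snoc X (!a) : Fin (3+1) → Bool) ∈ S
    · by_cases h2 : (Fin.snoc (cmpl X) (!a) : Fin (3+1) → Bool) ∈ S
      · -- both cross neighbours dead
        have hne : (Fin.snoc X (!a) : Fin (3+1) → Bool) ≠ Fin.snoc (cmpl X) (!a) := by
          intro h
          have := congrFun h (Fin.castSucc ⟨0, by omega⟩)
          simp only [Fin.snoc_castSucc, cmpl] at this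
          simp at this
        have hsub2 : ({Fin.snoc X (!a), Fin.snoc (cmpl X) (!a)} : Set (Fin (3+1) → Bool)) ⊆
            S ∩ side (!a) := by
          rintro v hv
          simp only [Set.mem_insert_iff, Set.mem_singleton_iff] at hv
          rcases hv with rfl | rfl
          · exact ⟨h1, by simp only [side, Set.mem_setOf_eq, Fin.snoc_last]⟩
          · exact ⟨h2, by simp only [side, Set.mem_setOf_eq, Fin.snoc_last]⟩
        have hset : ({Fin.snoc X (!a), Fin.snoc (cmpl X) (!a)} : Set (Fin (3+1) → Bool)) =
            S ∩ side (!a) := by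
          refine Set.eq_of_subset_of_ncard_le hsub2 ?_ (Set.toFinite _)
          rw [Set.ncard_pair hne]
          exact hsmall
        have halive : ∀ Y : Fin 3 → Bool, Y ≠ X → Y ≠ cmpl X →
            (Fin.snoc Y (!a) : Fin (3+1) → Bool) ∉ S := by
          intro Y hY1 hY2 hmem
          have hm2 : (Fin.snoc Y (!a) : Fin (3+1) → Bool) ∈
              ({Fin.snoc X (!a), Fin.snoc (cmpl X) (!a)} : Set (Fin (3+1) → Bool)) := by
            rw [hset]; exact ⟨hmem, by simp only [side, Set.mem_setOf_eq, Fin.snoc_last]⟩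
          simp only [Set.mem_insert_iff, Set.mem_singleton_iff] at hm2
          rcases hm2 with h | h
          · exact hY1 (snoc_injective (!a) h)
          · exact hY2 (snoc_injective (!a) h)
        -- size of the a-side part
        have hsplit := ncard_split S
        have h2eq : (S ∩ side (!a)).ncard = 2 := by
          rw [← hset, Set.ncard_pair hne]
        have hSaSide : (S ∩ side a).ncard ≤ 4 := by
          cases a <;> simp only [Bool.not_false, Bool.not_true] at h2eq <;> omega
        set Sa := {Y : Fin 3 → Bool | (Fin.snoc Y a : Fin (3+1) → Bool) ∈ S} with hSadef
        have hSa : Sa.ncard ≤ 4 := le_trans (ncard_sub_le a S) hSaSide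
        obtain ⟨ad0, ad1, ad2, add1, adc, n01, n02, n0d, n0c, n12, n1d, n1c, n2d, n2c, ndc⟩ :=
          aq3_facts X
        have hroute1 : ∀ Y : Fin 3 → Bool, (augCube 3).Adj X Y → Y ≠ cmpl X → Y ∉ Sa →
            ∃ Z, (Fin.snoc Z (!a) : Fin (3+1) → Bool) ∉ S ∧
              Avoid (augCube (3+1)) S u (Fin.snoc Z (!a)) := by
          intro Y hadj hY2 hYa
          have hYX : Y ≠ X := fun h => (augCube 3).loopless.irrefl X (h ▸ hadj)
          have hw : (Fin.snoc Y a : Fin (3+1) → Bool) ∉ S := hYa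
          have hcr : (Fin.snoc Y (!a) : Fin (3+1) → Bool) ∉ S := halive Y hYX hY2
          exact ⟨Y, hcr, (avoid_step (hu' ▸ adj_snoc a hadj) hu hw).trans
            (avoid_step (adj_cross1 a Y) hw hcr)⟩
        by_cases d0 : flipBit 0 X ∈ Sa
        · by_cases d1 : flipBit 1 X ∈ Sa
          · by_cases d2 : flipBit 2 X ∈ Sa
            · by_cases dd : flipDown 1 X ∈ Sa
              · -- all four hypercube-style neighbours dead: Sa is exactly these four
                have hsub4 : ({flipBit 0 X, flipBit 1 X, flipBit 2 X, flipDown 1 X} :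
                    Set (Fin 3 → Bool)) ⊆ Sa := by
                  rintro v hv
                  simp only [Set.mem_insert_iff, Set.mem_singleton_iff] at hv
                  rcases hv with rfl | rfl | rfl | rfl <;> assumption
                have hcard4 : ({flipBit 0 X, flipBit 1 X, flipBit 2 X, flipDown 1 X} :
                    Set (Fin 3 → Bool)).ncard = 4 := by
                  rw [Set.ncard_insert_of_notMem (by simp [n01, n02, n0d]),
                    Set.ncard_insert_of_notMem (by simp [n12, n1d]),
                    Set.ncard_pair n2d]
                have hSaeq : ({flipBit 0 X, flipBit 1 X, flipBit 2 X, flipDown 1 X} :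
                    Set (Fin 3 → Bool)) = Sa :=
                  Set.eq_of_subset_of_ncard_le hsub4 (by omega) (Set.toFinite _)
                have hcnot : cmpl X ∉ Sa := by
                  rw [← hSaeq]
                  simp only [Set.mem_insert_iff, Set.mem_singleton_iff]
                  rintro (h | h | h | h)
                  · exact n0c h.symm
                  · exact n1c h.symm
                  · exact n2c h.symm
                  · exact ndc h.symm
                have hw0 : (Fin.snoc (cmpl X) a : Fin (3+1) → Bool) ∉ S := hcnot
                obtain ⟨Y', hadj', e0, e1, e2, ed, eX, eC⟩ := aq3_F2 X
                have hY'Sa : Y' ∉ Sa := by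
                  rw [← hSaeq]
                  simp only [Set.mem_insert_iff, Set.mem_singleton_iff]
                  rintro (h | h | h | h)
                  · exact e0 h
                  · exact e1 h
                  · exact e2 h
                  · exact ed h
                have hw' : (Fin.snoc Y' a : Fin (3+1) → Bool) ∉ S := hY'Sa
                have hcr' : (Fin.snoc Y' (!a) : Fin (3+1) → Bool) ∉ S := halive Y' eX eC
                refine ⟨Y', hcr', ?_⟩
                have s1 : Avoid (augCube (3+1)) S u (Fin.snoc (cmpl X) a) :=
                  avoid_step (hu' ▸ adj_snoc a adc) hu hw0
                have s2 : Avoid (augCube (3+1)) S (Fin.snoc (cmpl X) a) (Fin.snoc Y' a) :=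
                  avoid_step (adj_snoc a hadj') hw0 hw'
                have s3 : Avoid (augCube (3+1)) S (Fin.snoc Y' a) (Fin.snoc Y' (!a)) :=
                  avoid_step (adj_cross1 a Y') hw' hcr'
                exact (s1.trans s2).trans s3
              · exact hroute1 _ add1 ndc dd
            · exact hroute1 _ ad2 n2c d2
          · exact hroute1 _ ad1 n1c d1
        · exact hroute1 _ ad0 n0c d0
      · exact ⟨cmpl X, h2, avoid_step (hu' ▸ adj_cross2 (by omega) a X) hu h2⟩
    · exact ⟨X, h1, avoid_step (hu' ▸ adj_cross1 a X) hu h1⟩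

end AQaux

namespace AQaux
open Fin

lemma two_mul_lt : ∀ m, 4 ≤ m → 2 * m < 2 ^ m := by
  intro m hm
  induction m, hm using Nat.le_induction with
  | base => norm_num
  | succ m hm IH =>
    have h2 : (2:ℕ) ^ 1 ≤ 2 ^ m := Nat.pow_le_pow_right (by norm_num) (by omega)
    rw [pow_succ]
    simp at h2
    omega

lemma thr_lt (m : ℕ) (hm : 2 ≤ m) : thr (m+1) < 2 ^ m := by
  by_cases h2 : m = 2
  · subst h2; norm_num [thr]
  by_cases h3 : m = 3
  · subst h3; norm_num [thr]
  · have hm4 : 4 ≤ m := by omega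
    have h := two_mul_lt m hm4
    have e : thr (m+1) = 2*(m+1) - 2 := by
      unfold thr; rw [if_neg (by omega), if_neg (by omega)]
    omega

lemma thr_ge_one (m : ℕ) (hm : 2 ≤ m) : 1 ≤ thr m := by
  unfold thr
  by_cases h2 : m = 2
  · simp [h2]
  by_cases h3 : m = 3
  · simp [h2, h3]
  · rw [if_neg h2, if_neg h3]; omega

lemma main : ∀ m : ℕ, 2 ≤ m → ∀ S : Set (Fin m → Bool), S.ncard ≤ thr m →
    ∀ x ∉ S, ∀ y ∉ S, Avoid (augCube m) S x y := by
  intro m hm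
  induction m, hm using Nat.le_induction with
  | base =>
    intro S hS x hx y hy
    by_cases h : x = y
    · exact h ▸ Avoid.rfl
    · exact avoid_step (aq2_complete x y h) hx hy
  | succ m hm IH =>
    intro S hS
    by_cases hA : {Z : Fin m → Bool | Fin.snoc Z false ∈ S}.ncard ≤ thr m ∧
        {Z : Fin m → Bool | Fin.snoc Z true ∈ S}.ncard ≤ thr m
    · refine caseEasy S IH hA.1 hA.2 ?_
      have hpow := thr_lt m hm
      omega
    · have hsplit := ncard_split S
      rcases not_and_or.mp hA with h | h
      · -- false side heavy
        push_neg at h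
        have hbig : thr m < (S ∩ side false).ncard := lt_of_lt_of_le h (ncard_sub_le false S)
        by_cases hm3 : m = 3
        · subst hm3
          refine caseHard S false IH hS ?_
          show (S ∩ side (!false)).ncard ≤ 2
          have : thr (3+1) = 6 := by norm_num [thr]
          have : thr 3 = 3 := by norm_num [thr]
          simp only [Bool.not_false]
          omega
        · have hm4 : 4 ≤ m := by
            rcases Nat.lt_or_ge m 4 with hlt | hge
            · exfalso
              have hm2 : m = 2 := by omega
              subst hm2
              have hle : (S ∩ side false).ncard ≤ S.ncard :=
                Set.ncard_le_ncard Set.inter_subset_left (Set.toFinite _)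
              have e1 : thr 2 = 4 := by norm_num [thr]
              have e2 : thr (2+1) = 3 := by norm_num [thr]
              omega
            · exact hge
          have e1 : thr m = 2*m - 2 := by
            unfold thr; rw [if_neg (by omega), if_neg (by omega)]
          have e2 : thr (m+1) = 2*(m+1) - 2 := by
            unfold thr; rw [if_neg (by omega), if_neg (by omega)]
          refine caseMed hm S false IH (thr_ge_one m hm) ?_
          show (S ∩ side (!false)).ncard ≤ 1
          simp only [Bool.not_false]
          omega
      · -- true side heavy
        push_neg at h
        have hbig : thr m < (S ∩ side true).ncard := lt_of_lt_of_le h (ncard_sub_le true S)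
        by_cases hm3 : m = 3
        · subst hm3
          refine caseHard S true IH hS ?_
          show (S ∩ side (!true)).ncard ≤ 2
          have : thr (3+1) = 6 := by norm_num [thr]
          have : thr 3 = 3 := by norm_num [thr]
          simp only [Bool.not_true]
          omega
        · have hm4 : 4 ≤ m := by
            rcases Nat.lt_or_ge m 4 with hlt | hge
            · exfalso
              have hm2 : m = 2 := by omega
              subst hm2
              have hle : (S ∩ side true).ncard ≤ S.ncard :=
                Set.ncard_le_ncard Set.inter_subset_left (Set.toFinite _)
              have e1 : thr 2 = 4 := by norm_num [thr]
              have e2 : thr (2+1) = 3 := by norm_num [thr]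
              omega
            · exact hge
          have e1 : thr m = 2*m - 2 := by
            unfold thr; rw [if_neg (by omega), if_neg (by omega)]
          have e2 : thr (m+1) = 2*(m+1) - 2 := by
            unfold thr; rw [if_neg (by omega), if_neg (by omega)]
          refine caseMed hm S true IH (thr_ge_one m hm) ?_
          show (S ∩ side (!true)).ncard ≤ 1
          simp only [Bool.not_true]
          omega

end AQaux

namespace AQaux

lemma card_fun_bool (n : ℕ) : (Set.univ : Set (Fin n → Bool)).ncard = 2 ^ n := by
  rw [Set.ncard_univ, Nat.card_eq_fintype_card]
  simp

section Upper
variable (n : ℕ)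

def v0 : Fin n → Bool := fun _ => false

def nbhd : Set (Fin n → Bool) := {w | (augCube n).Adj (v0 n) w}

lemma nbhd_eq (hn : 1 ≤ n) :
    nbhd n = (Set.range fun i : Fin n => flipBit i (v0 n)) ∪
      ((fun i : Fin n => flipDown i (v0 n)) '' {i | 1 ≤ i.val}) := by
  ext w
  constructor
  · rintro ⟨hne, ⟨i, rfl⟩ | ⟨i, hi, rfl⟩⟩
    · exact Or.inl ⟨i, rfl⟩
    · exact Or.inr ⟨i, hi, rfl⟩
  · rintro (⟨i, rfl⟩ | ⟨i, hi, rfl⟩)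
    · refine ⟨?_, Or.inl ⟨i, rfl⟩⟩
      intro h
      have := congrFun h i
      simp [v0, flipBit] at this
    · refine ⟨?_, Or.inr ⟨i, hi, rfl⟩⟩
      intro h
      have := congrFun h ⟨0, by omega⟩
      simp [v0, flipDown, Fin.le_def] at this

lemma flipBit_v0_apply (i j : Fin n) :
    flipBit i (v0 n) j = decide (j = i) := by
  by_cases h : j = i <;> simp [flipBit, v0, h]

lemma flipDown_v0_apply (i j : Fin n) :
    flipDown i (v0 n) j = decide (j ≤ i) := by
  by_cases h : j ≤ i <;> simp [flipDown, v0, h]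

lemma nbhd_ncard (hn : 1 ≤ n) : (nbhd n).ncard = 2 * n - 1 := by
  rw [nbhd_eq n hn]
  have hinj1 : Function.Injective fun i : Fin n => flipBit i (v0 n) := by
    intro i j h
    have := congrFun h i
    simp only [flipBit_v0_apply] at this
    simpa using this
  have hinj2 : Function.Injective fun i : Fin n => flipDown i (v0 n) := by
    intro i j h
    have h1 := congrFun h i
    have h2 := congrFun h j
    simp only [flipDown_v0_apply] at h1 h2
    simp at h1 h2
    exact le_antisymm h1 h2
  have hA : (Set.range fun i : Fin n => flipBit i (v0 n)).ncard = n := by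
    rw [← Set.image_univ, Set.ncard_image_of_injective _ hinj1, Set.ncard_univ,
      Nat.card_eq_fintype_card, Fintype.card_fin]
  have hB : (((fun i : Fin n => flipDown i (v0 n)) '' {i | 1 ≤ i.val})).ncard = n - 1 := by
    rw [Set.ncard_image_of_injective _ hinj2]
    have he : {i : Fin n | 1 ≤ i.val} = ({(⟨0, by omega⟩ : Fin n)} : Set (Fin n))ᶜ := by
      ext i
      simp only [Set.mem_setOf_eq, Set.mem_compl_iff, Set.mem_singleton_iff]
      constructor
      · intro h1 h2
        subst h2
        simp at h1
      · intro h1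
        rcases Nat.eq_zero_or_pos i.val with h | h
        · exact absurd (Fin.ext h) h1
        · exact h
    rw [he]
    have := Set.ncard_add_ncard_compl ({(⟨0, by omega⟩ : Fin n)} : Set (Fin n))
    rw [Set.ncard_singleton] at this
    have hu : Nat.card (Fin n) = n := by simp
    omega
  have hdisj : Disjoint (Set.range fun i : Fin n => flipBit i (v0 n))
      ((fun i : Fin n => flipDown i (v0 n)) '' {i | 1 ≤ i.val}) := by
    rw [Set.disjoint_left]
    rintro w ⟨i, rfl⟩ ⟨j, hj, he⟩
    have h0 := congrFun he ⟨0, by omega⟩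
    have hji := congrFun he j
    simp only [flipDown_v0_apply, flipBit_v0_apply] at h0 hji
    simp [Fin.le_def] at h0 hji
    have : (1:ℕ) ≤ j.val := hj
    rw [hji, ← h0] at this
    simp at this
  rw [Set.ncard_union_eq hdisj, hA, hB]
  omega

end Upper
end AQaux

namespace AQaux

def w2 (n : ℕ) : Fin n → Bool := fun j => decide (j.val = 0 ∨ j.val = 2)

lemma v0_not_mem (n : ℕ) : v0 n ∉ nbhd n := fun h => (augCube n).loopless.irrefl _ h

lemma w2_not_mem (n : ℕ) (hn : 4 ≤ n) : w2 n ∉ nbhd n := by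
  rintro ⟨hne, ⟨i, he⟩ | ⟨i, hi, he⟩⟩
  · have h0 := congrFun he ⟨0, by omega⟩
    have h2 := congrFun he ⟨2, by omega⟩
    simp only [flipBit_v0_apply, w2] at h0 h2
    simp [Fin.ext_iff] at h0 h2
    omega
  · have h1 := congrFun he ⟨1, by omega⟩
    simp only [flipDown_v0_apply, w2] at h1
    have : (⟨1, by omega⟩ : Fin n) ≤ i := by
      rw [Fin.le_def]; exact hi
    simp [this] at h1

lemma w2_ne_v0 (n : ℕ) (hn : 4 ≤ n) : w2 n ≠ v0 n := by
  intro h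
  have := congrFun h ⟨0, by omega⟩
  simp [w2, v0] at this

lemma not_connected (n : ℕ) (hn : 4 ≤ n) :
    ¬ ((augCube n).induce (nbhd n)ᶜ).Connected := by
  intro hcon
  have hv0 : v0 n ∈ (nbhd n)ᶜ := v0_not_mem n
  have hw2 : w2 n ∈ (nbhd n)ᶜ := w2_not_mem n hn
  have key : ∀ (z : ↥(nbhd n)ᶜ) (p : ((augCube n).induce (nbhd n)ᶜ).Walk ⟨v0 n, hv0⟩ z),
      z = ⟨v0 n, hv0⟩ := by
    intro z p
    cases p with
    | nil => rfl
    | cons h q =>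
      exfalso
      rename_i b
      have hadj : (augCube n).Adj (v0 n) ↑b := h
      exact b.2 hadj
  have hr := hcon.preconnected ⟨v0 n, hv0⟩ ⟨w2 n, hw2⟩
  obtain ⟨p⟩ := hr
  have := key ⟨w2 n, hw2⟩ p
  rw [Subtype.mk.injEq] at this
  exact w2_ne_v0 n hn this

end AQaux

/-- For every `n ≥ 4`, the vertex connectivity of `AQ_n` is `2n - 1`: the minimum
cardinality of a set `S` of vertices such that `AQ_n - S` is disconnected equals `2n - 1`. -/
theorem augCube_connectivity (n : ℕ) (hn : 4 ≤ n) :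
    IsLeast {k : ℕ | ∃ S : Set (Fin n → Bool),
      S.ncard = k ∧ ¬ ((augCube n).induce Sᶜ).Connected} (2 * n - 1) := by
  constructor
  · exact ⟨AQaux.nbhd n, AQaux.nbhd_ncard n (by omega), AQaux.not_connected n hn⟩
  · rintro k ⟨S, hcard, hdisc⟩
    by_contra hlt
    push_neg at hlt
    apply hdisc
    have hthr : S.ncard ≤ AQaux.thr n := by
      have e : AQaux.thr n = 2*n - 2 := by
        unfold AQaux.thr; rw [if_neg (by omega), if_neg (by omega)]
      omega
    rw [SimpleGraph.connected_iff]
    refine ⟨?_, ?_⟩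
    · intro u v
      have h := AQaux.avoid_reachable
        (AQaux.main n (by omega) S hthr u.val u.2 v.val v.2) u.2 v.2
      exact h
    · have hne : S ≠ Set.univ := by
        intro h
        have hp := AQaux.two_mul_lt n (by omega)
        rw [h, AQaux.card_fun_bool] at hcard
        omega
      obtain ⟨v, hv⟩ := Set.nonempty_compl.mpr hne
      exact ⟨⟨v, hv⟩⟩
end

section
/- For every n ≥ 2, the 1-extra edge-connectivity of the augmented cube satisfies λ_1(AQ_n) = 4n − 4; that is, the minimum cardinality of a set F of edges of AQ_n such that AQ_n − F is disconnected and every connected component of AQ_n − F has more than one vertex equals 4n − 4. -/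
-- ====== basic machinery ======
open Finset

abbrev V (n : ℕ) := Fin n → Bool

lemma flipBit_ne {n : ℕ} (i : Fin n) (X : V n) : flipBit i X ≠ X := by
  intro h
  have := congrFun h i
  simp [flipBit] at this

lemma flipDown_ne {n : ℕ} (i : Fin n) (X : V n) : flipDown i X ≠ X := by
  intro h
  have := congrFun h (⟨0, i.pos⟩ : Fin n)
  have h0 : (⟨0, i.pos⟩ : Fin n) ≤ i := by simp [Fin.le_def]
  simp [flipDown, h0] at this

lemma adj_iff {n : ℕ} (X Y : V n) :
    (augCube n).Adj X Y ↔
      ((∃ i : Fin n, Y = flipBit i X) ∨ (∃ i : Fin n, 1 ≤ i.val ∧ Y = flipDown i X)) := by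
  constructor
  · exact fun h => h.2
  · rintro (⟨i, rfl⟩ | ⟨i, hi, rfl⟩)
    · exact ⟨fun h => flipBit_ne i X h.symm, Or.inl ⟨i, rfl⟩⟩
    · exact ⟨fun h => flipDown_ne i X h.symm, Or.inr ⟨i, hi, rfl⟩⟩

instance augCubeAdjDecidable (n : ℕ) : DecidableRel (augCube n).Adj := fun X Y =>
  decidable_of_iff _ (adj_iff X Y).symm

def epairs (n : ℕ) (A B : Finset (V n)) : Finset (V n × V n) :=
  Finset.univ.filter (fun p => p.1 ∈ A ∧ p.2 ∈ B ∧ (augCube n).Adj p.1 p.2)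

lemma mem_epairs {n : ℕ} {A B : Finset (V n)} {p : V n × V n} :
    p ∈ epairs n A B ↔ p.1 ∈ A ∧ p.2 ∈ B ∧ (augCube n).Adj p.1 p.2 := by
  simp [epairs]

def cutP (n : ℕ) (S : Finset (V n)) : ℕ := (epairs n S Sᶜ).card

lemma epairs_card_eq_sum {n : ℕ} (A B : Finset (V n)) :
    (epairs n A B).card = ∑ x ∈ A, (B.filter (fun y => (augCube n).Adj x y)).card := by
  rw [Finset.card_eq_sum_card_fiberwise (f := Prod.fst) (t := A)
    (fun p hp => (mem_epairs.1 hp).1)]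
  refine Finset.sum_congr rfl (fun x hx => ?_)
  apply Finset.card_bij (fun p _ => p.2)
  · intro p hp
    simp only [Finset.mem_filter, mem_epairs] at hp ⊢
    exact ⟨hp.1.2.1, by rw [← hp.2]; exact hp.1.2.2⟩
  · intro p hp q hq h
    simp only [Finset.mem_filter] at hp hq
    exact Prod.ext (hp.2.trans hq.2.symm) h
  · intro y hy
    simp only [Finset.mem_filter, mem_epairs] at hy
    exact ⟨(x, y), by simp [mem_epairs, hx, hy.1, hy.2], rfl⟩

lemma epairs_card_comm {n : ℕ} (A B : Finset (V n)) :
    (epairs n A B).card = (epairs n B A).card := by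
  apply Finset.card_bij (fun p _ => Prod.swap p)
  · intro p hp
    simp only [mem_epairs] at hp ⊢
    exact ⟨hp.2.1, hp.1, hp.2.2.symm⟩
  · intro p _ q _ h
    exact Prod.swap_injective h
  · intro q hq
    simp only [mem_epairs] at hq
    exact ⟨Prod.swap q, by simp [mem_epairs, hq.1, hq.2.1, hq.2.2.symm], by simp⟩

lemma epairs_union_right {n : ℕ} (A B₁ B₂ : Finset (V n)) (h : Disjoint B₁ B₂) :
    (epairs n A (B₁ ∪ B₂)).card = (epairs n A B₁).card + (epairs n A B₂).card := by
  rw [← Finset.card_union_of_disjoint]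
  · congr 1
    ext p
    simp only [mem_epairs, Finset.mem_union]
    tauto
  · rw [Finset.disjoint_left]
    intro p hp1 hp2
    rw [mem_epairs] at hp1 hp2
    exact (Finset.disjoint_left.1 h) hp1.2.1 hp2.2.1

lemma epairs_card_le_mul {n : ℕ} (A B : Finset (V n)) :
    (epairs n A B).card ≤ A.card * B.card := by
  calc (epairs n A B).card ≤ (A ×ˢ B).card := by
        apply Finset.card_le_card
        intro p hp
        rw [mem_epairs] at hp
        exact Finset.mem_product.2 ⟨hp.1, hp.2.1⟩
    _ = A.card * B.card := Finset.card_product A B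

-- neighbor counting
lemma nbr_filter_eq {n : ℕ} (X : V n) :
    Finset.univ.filter (fun y => (augCube n).Adj X y) =
      (Finset.univ.image (fun i : Fin n => flipBit i X)) ∪
      ((Finset.univ.filter (fun i : Fin n => 1 ≤ i.val)).image (fun i => flipDown i X)) := by
  ext y
  simp only [Finset.mem_filter, Finset.mem_univ, true_and, Finset.mem_union, Finset.mem_image,
    adj_iff]
  constructor
  · rintro (⟨i, rfl⟩ | ⟨i, hi, rfl⟩)
    · exact Or.inl ⟨i, rfl⟩
    · exact Or.inr ⟨i, by simp [hi], rfl⟩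
  · rintro (⟨i, rfl⟩ | ⟨i, hi, rfl⟩)
    · exact Or.inl ⟨i, rfl⟩
    · exact Or.inr ⟨i, by simpa using hi, rfl⟩

lemma flipBit_right_inj {n : ℕ} {X : V n} {i j : Fin n} (h : flipBit i X = flipBit j X) :
    i = j := by
  by_contra hij
  have h1 := congrFun h i
  simp only [flipBit, if_pos rfl, if_neg hij] at h1
  exact (Bool.not_ne_self _) h1

lemma flipDown_right_inj {n : ℕ} {X : V n} {i j : Fin n} (h : flipDown i X = flipDown j X) :
    i = j := by
  rcases lt_trichotomy i j with hij | hij | hij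
  · have h1 := congrFun h j
    simp only [flipDown, if_neg (not_le.2 hij), if_pos (le_refl j)] at h1
    exact absurd h1.symm (Bool.not_ne_self _)
  · exact hij
  · have h1 := congrFun h i
    simp only [flipDown, if_pos (le_refl i), if_neg (not_le.2 hij)] at h1
    exact absurd h1 (Bool.not_ne_self _)

lemma flipBit_ne_flipDown {n : ℕ} {X : V n} {i j : Fin n} (hj : 1 ≤ j.val) :
    flipBit i X ≠ flipDown j X := by
  intro h
  set z : Fin n := ⟨0, j.pos⟩ with hz
  have hzj : z ≤ j := by simp [Fin.le_def, hz]
  by_cases hiz : i = z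
  · have h1 := congrFun h j
    have hji : j ≠ i := by
      intro hh
      rw [hh, hiz] at hj
      simp [hz] at hj
    simp only [flipBit, if_neg hji, flipDown, if_pos (le_refl j)] at h1
    exact (Bool.not_ne_self _) h1.symm
  · have h1 := congrFun h z
    have hzi : z ≠ i := fun hh => hiz hh.symm
    simp only [flipBit, if_neg hzi, flipDown, if_pos hzj] at h1
    exact (Bool.not_ne_self _) h1.symm

lemma card_nbr {n : ℕ} (hn : 1 ≤ n) (X : V n) :
    (Finset.univ.filter (fun y => (augCube n).Adj X y)).card = 2 * n - 1 := by
  rw [nbr_filter_eq]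
  have hc1 : (Finset.univ.image (fun i : Fin n => flipBit i X)).card = n := by
    rw [Finset.card_image_of_injective _ (fun i j h => flipBit_right_inj h), Finset.card_univ,
      Fintype.card_fin]
  have hc2 : ((Finset.univ.filter (fun i : Fin n => 1 ≤ i.val)).image
      (fun i => flipDown i X)).card = n - 1 := by
    rw [Finset.card_image_of_injective _ (fun i j h => flipDown_right_inj h)]
    have : (Finset.univ.filter (fun i : Fin n => 1 ≤ i.val)) =
        Finset.univ \ {(⟨0, hn⟩ : Fin n)} := by
      ext i
      simp only [Finset.mem_filter, Finset.mem_univ, true_and, Finset.mem_sdiff,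
        Finset.mem_singleton]
      constructor
      · intro h1 h2
        rw [h2] at h1
        simp at h1
      · intro h1
        have : i.val ≠ 0 := fun hh => h1 (Fin.ext hh)
        omega
    rw [this, Finset.card_sdiff_of_subset (by simp), Finset.card_univ, Fintype.card_fin,
      Finset.card_singleton]
  rw [Finset.card_union_of_disjoint, hc1, hc2]
  · omega
  · rw [Finset.disjoint_left]
    rintro y hy1 hy2
    simp only [Finset.mem_image, Finset.mem_filter, Finset.mem_univ, true_and] at hy1 hy2
    obtain ⟨i, rfl⟩ := hy1
    obtain ⟨j, hj, hh⟩ := hy2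
    exact flipBit_ne_flipDown hj hh.symm

lemma gen_bound {n : ℕ} (hn : 1 ≤ n) (S : Finset (V n)) :
    S.card * (2 * n - 1) ≤ cutP n S + S.card * (S.card - 1) := by
  have key : ∀ x ∈ S, 2 * n - 1 ≤ (Sᶜ.filter (fun y => (augCube n).Adj x y)).card
      + (S.card - 1) := by
    intro x hx
    have hsplit : (Finset.univ.filter (fun y => (augCube n).Adj x y)) =
        (Sᶜ.filter (fun y => (augCube n).Adj x y)) ∪ (S.filter (fun y => (augCube n).Adj x y)) := by
      ext y
      simp only [Finset.mem_filter, Finset.mem_univ, true_and, Finset.mem_union,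
        Finset.mem_compl]
      tauto
    have hcard := card_nbr hn x
    rw [hsplit] at hcard
    have hle : (S.filter (fun y => (augCube n).Adj x y)).card ≤ S.card - 1 := by
      have hsub : S.filter (fun y => (augCube n).Adj x y) ⊆ S.erase x := by
        intro y hy
        rw [Finset.mem_filter] at hy
        exact Finset.mem_erase.2 ⟨fun hh => (augCube n).loopless.irrefl x (hh ▸ hy.2), hy.1⟩
      calc _ ≤ (S.erase x).card := Finset.card_le_card hsub
        _ = S.card - 1 := Finset.card_erase_of_mem hx
    have := Finset.card_union_le (Sᶜ.filter (fun y => (augCube n).Adj x y))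
      (S.filter (fun y => (augCube n).Adj x y))
    omega
  calc S.card * (2 * n - 1) = ∑ _x ∈ S, (2 * n - 1) := by rw [Finset.sum_const, smul_eq_mul]
    _ ≤ ∑ x ∈ S, ((Sᶜ.filter (fun y => (augCube n).Adj x y)).card + (S.card - 1)) :=
        Finset.sum_le_sum key
    _ = cutP n S + S.card * (S.card - 1) := by
        rw [Finset.sum_add_distrib, Finset.sum_const, smul_eq_mul, cutP, epairs_card_eq_sum]


-- ===== half decomposition =====
def half (m : ℕ) (b : Bool) : Finset (V (m + 1)) :=
  Finset.univ.filter (fun v => v (Fin.last m) = b)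

def dn {m : ℕ} (v : V (m + 1)) : V m := fun j => v j.castSucc

def up {m : ℕ} (b : Bool) (w : V m) : V (m + 1) := Fin.snoc w b

lemma mem_half {m : ℕ} {b : Bool} {v : V (m + 1)} : v ∈ half m b ↔ v (Fin.last m) = b := by
  simp [half]

lemma up_last {m : ℕ} (b : Bool) (w : V m) : up b w (Fin.last m) = b := by
  simp [up]

lemma dn_up {m : ℕ} (b : Bool) (w : V m) : dn (up b w) = w := by
  funext j; simp [dn, up]

lemma up_dn {m : ℕ} (v : V (m + 1)) : up (v (Fin.last m)) (dn v) = v := by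
  funext j
  induction j using Fin.lastCases with
  | last => simp [up]
  | cast j => simp [up, dn]

lemma up_injective {m : ℕ} (b : Bool) : Function.Injective (up (m := m) b) := by
  intro w w' h
  rw [← dn_up b w, ← dn_up b w', h]

lemma flipBit_castSucc_up {m : ℕ} (j : Fin m) (b : Bool) (w : V m) :
    flipBit j.castSucc (up b w) = up b (flipBit j w) := by
  funext k
  induction k using Fin.lastCases with
  | last => simp [flipBit, up, (Fin.castSucc_lt_last j).ne']
  | cast k => simp [flipBit, up, Fin.castSucc_inj]

lemma flipDown_castSucc_up {m : ℕ} (j : Fin m) (b : Bool) (w : V m) :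
    flipDown j.castSucc (up b w) = up b (flipDown j w) := by
  funext k
  induction k using Fin.lastCases with
  | last => simp [flipDown, up, not_le.2 (Fin.castSucc_lt_last j)]
  | cast k => simp [flipDown, up, Fin.castSucc_le_castSucc_iff]

lemma flipBit_last_up {m : ℕ} (b : Bool) (w : V m) :
    flipBit (Fin.last m) (up b w) = up (!b) w := by
  funext k
  induction k using Fin.lastCases with
  | last => simp [flipBit, up]
  | cast k => simp [flipBit, up, (Fin.castSucc_lt_last k).ne]

lemma flipDown_last_up {m : ℕ} (b : Bool) (w : V m) :
    flipDown (Fin.last m) (up b w) = up (!b) (fun k => !(w k)) := by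
  funext k
  induction k using Fin.lastCases with
  | last => simp [flipDown, up]
  | cast k => simp [flipDown, up, (Fin.castSucc_lt_last k).le]

lemma adj_up_same {m : ℕ} (b : Bool) (w w' : V m) :
    (augCube (m + 1)).Adj (up b w) (up b w') ↔ (augCube m).Adj w w' := by
  rw [adj_iff, adj_iff]
  constructor
  · rintro (⟨i, hi⟩ | ⟨i, h1, hi⟩)
    · induction i using Fin.lastCases with
      | last =>
        rw [flipBit_last_up] at hi
        have := congrFun hi (Fin.last m)
        simp [up] at this
      | cast j =>
        rw [flipBit_castSucc_up] at hi
        exact Or.inl ⟨j, up_injective b hi⟩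
    · induction i using Fin.lastCases with
      | last =>
        rw [flipDown_last_up] at hi
        have := congrFun hi (Fin.last m)
        simp [up] at this
      | cast j =>
        rw [flipDown_castSucc_up] at hi
        exact Or.inr ⟨j, by simpa using h1, up_injective b hi⟩
  · rintro (⟨j, rfl⟩ | ⟨j, h1, rfl⟩)
    · exact Or.inl ⟨j.castSucc, (flipBit_castSucc_up j b w).symm⟩
    · exact Or.inr ⟨j.castSucc, by simpa using h1, (flipDown_castSucc_up j b w).symm⟩

lemma adj_up_cross {m : ℕ} (hm : 1 ≤ m) (b : Bool) (w w' : V m) :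
    (augCube (m + 1)).Adj (up b w) (up (!b) w') ↔ (w' = w ∨ w' = fun k => !(w k)) := by
  rw [adj_iff]
  constructor
  · rintro (⟨i, hi⟩ | ⟨i, h1, hi⟩)
    · induction i using Fin.lastCases with
      | last =>
        rw [flipBit_last_up] at hi
        exact Or.inl (up_injective _ hi)
      | cast j =>
        rw [flipBit_castSucc_up] at hi
        have := congrFun hi (Fin.last m)
        simp [up] at this
    · induction i using Fin.lastCases with
      | last =>
        rw [flipDown_last_up] at hi
        exact Or.inr (up_injective _ hi)
      | cast j =>
        rw [flipDown_castSucc_up] at hi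
        have := congrFun hi (Fin.last m)
        simp [up] at this
  · rintro (h | h)
    · exact Or.inl ⟨Fin.last m, by rw [h, flipBit_last_up]⟩
    · exact Or.inr ⟨Fin.last m, by simpa using hm, by rw [h, flipDown_last_up]⟩

lemma bool_ne_iff {a b : Bool} : a ≠ b ↔ a = !b := by cases a <;> cases b <;> simp

lemma cross_adj_iff {m : ℕ} (hm : 1 ≤ m) {x y : V (m + 1)}
    (hxy : x (Fin.last m) ≠ y (Fin.last m)) :
    (augCube (m + 1)).Adj x y ↔
      (y = flipBit (Fin.last m) x ∨ y = flipDown (Fin.last m) x) := by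
  set b := x (Fin.last m) with hb
  have hx : x = up b (dn x) := (up_dn x).symm
  have hyb : y (Fin.last m) = !b := bool_ne_iff.1 (fun h => hxy h.symm)
  have hy : y = up (!b) (dn y) := by rw [← hyb]; exact (up_dn y).symm
  rw [hx, hy, adj_up_cross hm, flipBit_last_up, flipDown_last_up]
  constructor
  · rintro (h | h) <;> rw [h]
    · exact Or.inl rfl
    · exact Or.inr rfl
  · rintro (h | h)
    · exact Or.inl (up_injective _ h)
    · exact Or.inr (up_injective _ h)

lemma flipBit_last_mem_half {m : ℕ} {b : Bool} {x : V (m + 1)} (hx : x ∈ half m b) :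
    flipBit (Fin.last m) x ∈ half m (!b) := by
  rw [mem_half] at hx ⊢
  simp [flipBit, hx]

lemma flipDown_last_mem_half {m : ℕ} {b : Bool} {x : V (m + 1)} (hx : x ∈ half m b) :
    flipDown (Fin.last m) x ∈ half m (!b) := by
  rw [mem_half] at hx ⊢
  simp [flipDown, hx]

lemma flipBit_ne_flipDown_last {m : ℕ} (hm : 1 ≤ m) (x : V (m + 1)) :
    flipBit (Fin.last m) x ≠ flipDown (Fin.last m) x := by
  intro h
  have h0 : (⟨0, Nat.succ_pos m⟩ : Fin (m + 1)) ≠ Fin.last m := by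
    intro hh
    have := congrArg Fin.val hh
    simp [Fin.last] at this
    omega
  have := congrFun h ⟨0, Nat.succ_pos m⟩
  simp only [flipBit, if_neg h0, flipDown] at this
  rw [if_pos (by simp [Fin.le_def])] at this
  exact (Bool.not_ne_self _) this.symm

lemma cross_fiber {m : ℕ} (hm : 1 ≤ m) {b : Bool} {x : V (m + 1)} (hx : x ∈ half m b) :
    (half m (!b)).filter (fun y => (augCube (m + 1)).Adj x y) =
      {flipBit (Fin.last m) x, flipDown (Fin.last m) x} := by
  ext y
  simp only [Finset.mem_filter, Finset.mem_insert, Finset.mem_singleton]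
  constructor
  · rintro ⟨hy, hadj⟩
    rw [mem_half] at hx hy
    refine (cross_adj_iff hm ?_).1 hadj
    rw [hx, hy]
    cases b <;> simp
  · rintro (rfl | rfl)
    · refine ⟨flipBit_last_mem_half hx, ?_⟩
      exact (adj_iff _ _).2 (Or.inl ⟨Fin.last m, rfl⟩)
    · refine ⟨flipDown_last_mem_half hx, ?_⟩
      exact (adj_iff _ _).2 (Or.inr ⟨Fin.last m, by simpa using hm, rfl⟩)

lemma cross_fiber_card {m : ℕ} (hm : 1 ≤ m) {b : Bool} {x : V (m + 1)} (hx : x ∈ half m b) :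
    ((half m (!b)).filter (fun y => (augCube (m + 1)).Adj x y)).card = 2 := by
  rw [cross_fiber hm hx, Finset.card_insert_of_notMem (by
    simpa using flipBit_ne_flipDown_last hm x), Finset.card_singleton]

lemma epairs_to_half {m : ℕ} (hm : 1 ≤ m) {b : Bool} {P : Finset (V (m + 1))}
    (hP : P ⊆ half m b) :
    (epairs (m + 1) P (half m (!b))).card = 2 * P.card := by
  rw [epairs_card_eq_sum]
  rw [Finset.sum_congr rfl (fun x hx => cross_fiber_card hm (hP hx))]
  rw [Finset.sum_const, smul_eq_mul, mul_comm]

lemma epairs_cross_le {m : ℕ} (hm : 1 ≤ m) {b : Bool} {P Q : Finset (V (m + 1))}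
    (hP : P ⊆ half m b) (hQ : Q ⊆ half m (!b)) :
    (epairs (m + 1) P Q).card ≤ 2 * Q.card := by
  rw [epairs_card_comm, epairs_card_eq_sum]
  calc ∑ y ∈ Q, (P.filter (fun x => (augCube (m + 1)).Adj y x)).card
      ≤ ∑ _y ∈ Q, 2 := by
        refine Finset.sum_le_sum (fun y hy => ?_)
        have hsub : P.filter (fun x => (augCube (m + 1)).Adj y x) ⊆
            (half m (!(!b))).filter (fun x => (augCube (m + 1)).Adj y x) := by
          intro x hx
          rw [Finset.mem_filter] at hx ⊢
          exact ⟨by simpa using hP hx.1, hx.2⟩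
        calc _ ≤ _ := Finset.card_le_card hsub
          _ = 2 := cross_fiber_card hm (hQ hy)
    _ = 2 * Q.card := by rw [Finset.sum_const, smul_eq_mul, mul_comm]

lemma card_half {m : ℕ} (b : Bool) : (half m b).card = 2 ^ m := by
  have : half m b = Finset.univ.image (up b) := by
    ext v
    simp only [mem_half, Finset.mem_image, Finset.mem_univ, true_and]
    constructor
    · intro h
      exact ⟨dn v, by rw [← h, up_dn]⟩
    · rintro ⟨w, rfl⟩
      exact up_last b w
  rw [this, Finset.card_image_of_injective _ (up_injective b), Finset.card_univ]
  simp [Fintype.card_fun]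

lemma half_split {m : ℕ} (b : Bool) (S : Finset (V (m + 1))) :
    half m b = (S ∩ half m b) ∪ (Sᶜ ∩ half m b) := by
  ext v
  simp only [Finset.mem_union, Finset.mem_inter, Finset.mem_compl]
  tauto

lemma vert_split {m : ℕ} (S : Finset (V (m + 1))) :
    S = (S ∩ half m false) ∪ (S ∩ half m true) := by
  ext v
  simp only [Finset.mem_union, Finset.mem_inter, mem_half]
  rcases Bool.dichotomy (v (Fin.last m)) with h | h <;> simp [h]

lemma inter_half_disjoint {m : ℕ} (A B : Finset (V (m + 1))) :
    Disjoint (A ∩ half m false) (B ∩ half m true) := by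
  rw [Finset.disjoint_left]
  intro v hv1 hv2
  rw [Finset.mem_inter, mem_half] at hv1 hv2
  rw [hv1.2] at hv2
  exact Bool.false_ne_true hv2.2

lemma epairs_union_left {n : ℕ} (A₁ A₂ B : Finset (V n)) (h : Disjoint A₁ A₂) :
    (epairs n (A₁ ∪ A₂) B).card = (epairs n A₁ B).card + (epairs n A₂ B).card := by
  rw [epairs_card_comm, epairs_union_right _ _ _ h, epairs_card_comm B A₁, epairs_card_comm B A₂]

lemma cut_split {m : ℕ} (S : Finset (V (m + 1))) :
    cutP (m + 1) S =
      (epairs (m + 1) (S ∩ half m false) (Sᶜ ∩ half m false)).card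
      + (epairs (m + 1) (S ∩ half m false) (Sᶜ ∩ half m true)).card
      + ((epairs (m + 1) (S ∩ half m true) (Sᶜ ∩ half m false)).card
      + (epairs (m + 1) (S ∩ half m true) (Sᶜ ∩ half m true)).card) := by
  have h1 : (epairs (m + 1) S Sᶜ).card =
      (epairs (m + 1) ((S ∩ half m false) ∪ (S ∩ half m true))
        ((Sᶜ ∩ half m false) ∪ (Sᶜ ∩ half m true))).card := by
    rw [← vert_split, ← vert_split]
  rw [cutP, h1]
  rw [epairs_union_left _ _ _ (inter_half_disjoint S S),
    epairs_union_right _ _ _ (inter_half_disjoint Sᶜ Sᶜ),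
    epairs_union_right _ _ _ (inter_half_disjoint Sᶜ Sᶜ)]

lemma mem_image_dn {m : ℕ} {b : Bool} {A : Finset (V (m + 1))} (hA : A ⊆ half m b)
    {w : V m} : w ∈ A.image dn ↔ up b w ∈ A := by
  constructor
  · rintro hw
    rw [Finset.mem_image] at hw
    obtain ⟨v, hv, rfl⟩ := hw
    have := mem_half.1 (hA hv)
    rwa [← this, up_dn]
  · intro h
    exact Finset.mem_image.2 ⟨up b w, h, dn_up b w⟩

lemma image_dn_compl {m : ℕ} {b : Bool} (S : Finset (V (m + 1))) :
    ((S ∩ half m b).image dn)ᶜ = (Sᶜ ∩ half m b).image dn := by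
  ext w
  rw [Finset.mem_compl, mem_image_dn Finset.inter_subset_right,
    mem_image_dn Finset.inter_subset_right, Finset.mem_inter, Finset.mem_inter,
    Finset.mem_compl]
  have : up b w ∈ half m b := mem_half.2 (up_last b w)
  tauto

lemma card_image_dn {m : ℕ} {b : Bool} {A : Finset (V (m + 1))} (hA : A ⊆ half m b) :
    (A.image dn).card = A.card := by
  apply Finset.card_image_of_injOn
  intro v hv v' hv' h
  have h1 := mem_half.1 (hA hv)
  have h2 := mem_half.1 (hA hv')
  rw [← up_dn v, ← up_dn v', h1, h2, h]

lemma epairs_card_half {m : ℕ} {b : Bool} {A B : Finset (V (m + 1))}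
    (hA : A ⊆ half m b) (hB : B ⊆ half m b) :
    (epairs (m + 1) A B).card = (epairs m (A.image dn) (B.image dn)).card := by
  apply Finset.card_bij (fun p _ => (dn p.1, dn p.2))
  · intro p hp
    rw [mem_epairs] at hp
    rw [mem_epairs]
    refine ⟨Finset.mem_image.2 ⟨p.1, hp.1, rfl⟩, Finset.mem_image.2 ⟨p.2, hp.2.1, rfl⟩, ?_⟩
    have e1 : p.1 = up b (dn p.1) := by rw [← mem_half.1 (hA hp.1), up_dn]
    have e2 : p.2 = up b (dn p.2) := by rw [← mem_half.1 (hB hp.2.1), up_dn]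
    rw [e1, e2, adj_up_same] at hp
    exact hp.2.2
  · intro p hp q hq h
    rw [mem_epairs] at hp hq
    have e1 : p.1 = up b (dn p.1) := by rw [← mem_half.1 (hA hp.1), up_dn]
    have e2 : p.2 = up b (dn p.2) := by rw [← mem_half.1 (hB hp.2.1), up_dn]
    have f1 : q.1 = up b (dn q.1) := by rw [← mem_half.1 (hA hq.1), up_dn]
    have f2 : q.2 = up b (dn q.2) := by rw [← mem_half.1 (hB hq.2.1), up_dn]
    have h1 := congrArg Prod.fst h
    have h2 := congrArg Prod.snd h
    simp only at h1 h2
    exact Prod.ext (by rw [e1, f1, h1]) (by rw [e2, f2, h2])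
  · intro q hq
    rw [mem_epairs] at hq
    refine ⟨(up b q.1, up b q.2), ?_, ?_⟩
    · rw [mem_epairs]
      exact ⟨(mem_image_dn hA).1 hq.1, (mem_image_dn hB).1 hq.2.1,
        (adj_up_same b q.1 q.2).2 hq.2.2⟩
    · simp [dn_up]

lemma epairs_LL_eq_cut {m : ℕ} (b : Bool) (S : Finset (V (m + 1))) :
    (epairs (m + 1) (S ∩ half m b) (Sᶜ ∩ half m b)).card =
      cutP m ((S ∩ half m b).image dn) := by
  rw [cutP, image_dn_compl]
  exact epairs_card_half Finset.inter_subset_right Finset.inter_subset_right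

lemma disj_S_compl {n : ℕ} (S A B : Finset (V n)) : Disjoint (S ∩ A) (Sᶜ ∩ B) := by
  rw [Finset.disjoint_left]
  intro v hv1 hv2
  rw [Finset.mem_inter] at hv1 hv2
  exact (Finset.mem_compl.1 hv2.1) hv1.1

lemma cross_lower {m : ℕ} (hm : 1 ≤ m) (b : Bool) (P Q1 Q2 : Finset (V (m + 1)))
    (hP : P ⊆ half m b) (hQ2 : Q2 ⊆ half m (!b))
    (hsplit : half m (!b) = Q1 ∪ Q2) (hdisj : Disjoint Q1 Q2) :
    2 * P.card ≤ (epairs (m + 1) P Q1).card + 2 * Q2.card := by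
  have h1 : 2 * P.card = (epairs (m + 1) P Q1).card + (epairs (m + 1) P Q2).card := by
    rw [← epairs_to_half hm hP, hsplit, epairs_union_right _ _ _ hdisj]
  have h2 := epairs_cross_le hm hP hQ2
  omega

lemma cross_lower_mul {m : ℕ} (hm : 1 ≤ m) (b : Bool) (P Q1 Q2 : Finset (V (m + 1)))
    (hP : P ⊆ half m b)
    (hsplit : half m (!b) = Q1 ∪ Q2) (hdisj : Disjoint Q1 Q2) :
    2 * P.card ≤ (epairs (m + 1) P Q1).card + P.card * Q2.card := by
  have h1 : 2 * P.card = (epairs (m + 1) P Q1).card + (epairs (m + 1) P Q2).card := by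
    rw [← epairs_to_half hm hP, hsplit, epairs_union_right _ _ _ hdisj]
  have h2 := epairs_card_le_mul P Q2
  omega

lemma cb_S {m : ℕ} (hm : 1 ≤ m) (b : Bool) (S : Finset (V (m + 1))) :
    2 * (S ∩ half m b).card ≤
      (epairs (m + 1) (S ∩ half m b) (Sᶜ ∩ half m (!b))).card + 2 * (S ∩ half m (!b)).card := by
  refine cross_lower hm b _ _ _ Finset.inter_subset_right Finset.inter_subset_right ?_ ?_
  · rw [Finset.union_comm]
    exact half_split (!b) S
  · exact (disj_S_compl S _ _).symm

lemma cb_S_mul {m : ℕ} (hm : 1 ≤ m) (b : Bool) (S : Finset (V (m + 1))) :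
    2 * (S ∩ half m b).card ≤
      (epairs (m + 1) (S ∩ half m b) (Sᶜ ∩ half m (!b))).card +
        (S ∩ half m b).card * (S ∩ half m (!b)).card := by
  refine cross_lower_mul hm b _ _ _ Finset.inter_subset_right ?_ ?_
  · rw [Finset.union_comm]
    exact half_split (!b) S
  · exact (disj_S_compl S _ _).symm

lemma cb_T {m : ℕ} (hm : 1 ≤ m) (b : Bool) (S : Finset (V (m + 1))) :
    2 * (Sᶜ ∩ half m (!b)).card ≤
      (epairs (m + 1) (S ∩ half m b) (Sᶜ ∩ half m (!b))).card + 2 * (Sᶜ ∩ half m b).card := by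
  have h := cross_lower hm (!b) (Sᶜ ∩ half m (!b)) (S ∩ half m b) (Sᶜ ∩ half m b)
    Finset.inter_subset_right
    (by rw [Bool.not_not]; exact Finset.inter_subset_right)
    (by rw [Bool.not_not]; exact half_split b S)
    (disj_S_compl S _ _)
  rwa [epairs_card_comm] at h

lemma card_inter_half_compl {m : ℕ} (b : Bool) (S : Finset (V (m + 1))) :
    (S ∩ half m b).card + (Sᶜ ∩ half m b).card = 2 ^ m := by
  rw [← Finset.card_union_of_disjoint (disj_S_compl S _ _), ← half_split, card_half]

lemma card_S_split {m : ℕ} (S : Finset (V (m + 1))) :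
    (S ∩ half m false).card + (S ∩ half m true).card = S.card := by
  rw [← Finset.card_union_of_disjoint (inter_half_disjoint S S), ← vert_split]

lemma adj_up_cross' {m : ℕ} (hm : 1 ≤ m) (b : Bool) (w w' : V m) :
    (augCube (m + 1)).Adj (up (!b) w) (up b w') ↔ (w' = w ∨ w' = fun k => !(w k)) := by
  have := adj_up_cross hm (!b) w w'
  rwa [Bool.not_not] at this

lemma adj_tau {m : ℕ} (hm : 1 ≤ m) (x y : V (m + 1)) :
    (augCube (m + 1)).Adj (flipBit (Fin.last m) x) (flipBit (Fin.last m) y) ↔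
      (augCube (m + 1)).Adj x y := by
  obtain ⟨bx, wx, rfl⟩ : ∃ b w, x = up b w := ⟨_, _, (up_dn x).symm⟩
  obtain ⟨by', wy, rfl⟩ : ∃ b w, y = up b w := ⟨_, _, (up_dn y).symm⟩
  rw [flipBit_last_up, flipBit_last_up]
  by_cases hb : by' = bx
  · subst hb
    rw [adj_up_same, adj_up_same]
  · have hb' : by' = !bx := bool_ne_iff.1 hb
    subst hb'
    rw [Bool.not_not, adj_up_cross' hm, adj_up_cross hm]

lemma tau_invol {m : ℕ} (x : V (m + 1)) :
    flipBit (Fin.last m) (flipBit (Fin.last m) x) = x := flipBit_flipBit _ _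

lemma tau_inj {m : ℕ} : Function.Injective (flipBit (Fin.last m)) :=
  Function.Involutive.injective tau_invol

lemma mem_image_tau {m : ℕ} {S : Finset (V (m + 1))} {x : V (m + 1)} :
    x ∈ S.image (flipBit (Fin.last m)) ↔ flipBit (Fin.last m) x ∈ S := by
  constructor
  · intro h
    obtain ⟨s, hs, rfl⟩ := Finset.mem_image.1 h
    rwa [tau_invol]
  · intro h
    exact Finset.mem_image.2 ⟨_, h, tau_invol x⟩

lemma cut_tau {m : ℕ} (hm : 1 ≤ m) (S : Finset (V (m + 1))) :
    cutP (m + 1) (S.image (flipBit (Fin.last m))) = cutP (m + 1) S := by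
  apply Finset.card_bij (fun p _ => (flipBit (Fin.last m) p.1, flipBit (Fin.last m) p.2))
  · intro p hp
    rw [mem_epairs] at hp ⊢
    refine ⟨mem_image_tau.1 hp.1, ?_, (adj_tau hm _ _).2 hp.2.2⟩
    rw [Finset.mem_compl] at hp ⊢
    intro hc
    exact hp.2.1 (mem_image_tau.2 hc)
  · intro p _ q _ h
    have h1 := congrArg Prod.fst h
    have h2 := congrArg Prod.snd h
    exact Prod.ext (tau_inj h1) (tau_inj h2)
  · intro q hq
    rw [mem_epairs] at hq
    refine ⟨(flipBit (Fin.last m) q.1, flipBit (Fin.last m) q.2), ?_, by simp [tau_invol]⟩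
    rw [mem_epairs]
    refine ⟨mem_image_tau.2 (by rw [tau_invol]; exact hq.1), ?_, (adj_tau hm _ _).2 hq.2.2⟩
    rw [Finset.mem_compl, mem_image_tau, tau_invol]
    exact Finset.mem_compl.1 hq.2.1

lemma tau_last {m : ℕ} (x : V (m + 1)) :
    flipBit (Fin.last m) x (Fin.last m) = !(x (Fin.last m)) := by
  simp [flipBit]

lemma image_tau_inter_half {m : ℕ} (b : Bool) (S : Finset (V (m + 1))) :
    (S.image (flipBit (Fin.last m))) ∩ half m b =
      (S ∩ half m (!b)).image (flipBit (Fin.last m)) := by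
  ext v
  rw [Finset.mem_inter, mem_image_tau, mem_half]
  constructor
  · rintro ⟨h1, h2⟩
    refine Finset.mem_image.2 ⟨flipBit (Fin.last m) v, ?_, tau_invol v⟩
    rw [Finset.mem_inter, mem_half, tau_last, h2]
    exact ⟨h1, rfl⟩
  · intro h
    obtain ⟨s, hs, rfl⟩ := Finset.mem_image.1 h
    rw [Finset.mem_inter, mem_half] at hs
    rw [tau_invol, tau_last, hs.2]
    exact ⟨hs.1, Bool.not_not b⟩

lemma card_image_tau_inter_half {m : ℕ} (b : Bool) (S : Finset (V (m + 1))) :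
    ((S.image (flipBit (Fin.last m))) ∩ half m b).card = (S ∩ half m (!b)).card := by
  rw [image_tau_inter_half, Finset.card_image_of_injective _ tau_inj]

lemma card_univ_V (k : ℕ) : (Finset.univ : Finset (V k)).card = 2 ^ k := by
  rw [Finset.card_univ]
  simp [Fintype.card_fun]

lemma ne_univ_of_card_lt {k : ℕ} {S : Finset (V k)} (h : S.card < 2 ^ k) :
    S ≠ Finset.univ := by
  intro hh
  rw [hh, card_univ_V] at h
  omega

lemma card_lt_of_ne_univ {k : ℕ} {S : Finset (V k)} (h : S ≠ Finset.univ) :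
    S.card < 2 ^ k := by
  rw [← card_univ_V k]
  exact Finset.card_lt_card (Finset.ssubset_univ_iff.2 h)

lemma EC_aux {m : ℕ} (hm : 1 ≤ m)
    (IH : ∀ S : Finset (V m), S.Nonempty → S ≠ Finset.univ → 2 * m - 1 ≤ cutP m S)
    (S : Finset (V (m + 1))) (hne : S.Nonempty) (hproper : S ≠ Finset.univ)
    (hab : (S ∩ half m false).card ≤ (S ∩ half m true).card) :
    2 * (m + 1) - 1 ≤ cutP (m + 1) S := by
  set a := (S ∩ half m false).card with ha
  set b := (S ∩ half m true).card with hb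
  set ta := (Sᶜ ∩ half m false).card with hta
  set tb := (Sᶜ ∩ half m true).card with htb
  have hsplit := cut_split S
  set LL := (epairs (m + 1) (S ∩ half m false) (Sᶜ ∩ half m false)).card with hLL
  set LR := (epairs (m + 1) (S ∩ half m false) (Sᶜ ∩ half m true)).card with hLR
  set RL := (epairs (m + 1) (S ∩ half m true) (Sᶜ ∩ half m false)).card with hRL
  set RR := (epairs (m + 1) (S ∩ half m true) (Sᶜ ∩ half m true)).card with hRR
  have hca : a + ta = 2 ^ m := card_inter_half_compl false S
  have hcb : b + tb = 2 ^ m := card_inter_half_compl true S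
  have hcs : a + b = S.card := card_S_split S
  have hSlt : S.card < 2 ^ (m + 1) := card_lt_of_ne_univ hproper
  have hSpos : 1 ≤ S.card := Finset.card_pos.2 hne
  have hpow : 2 ^ (m + 1) = 2 * 2 ^ m := by rw [pow_succ, mul_comm]
  have hmlt : m < 2 ^ m := Nat.lt_two_pow_self (n := m)
  have cb1 : 2 * b ≤ RL + 2 * a := cb_S hm true S
  have cb2 : 2 * ta ≤ RL + 2 * tb := cb_T hm true S
  have cb3 : 2 * a ≤ LR + a * b := cb_S_mul hm false S
  -- IH applications
  have hIH0 : 1 ≤ a → a < 2 ^ m → 2 * m - 1 ≤ LL := by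
    intro h1 h2
    rw [hLL, epairs_LL_eq_cut]
    apply IH
    · rw [← Finset.card_pos, card_image_dn Finset.inter_subset_right]
      exact h1
    · exact ne_univ_of_card_lt (by rwa [card_image_dn Finset.inter_subset_right])
  have hIH1 : 1 ≤ b → b < 2 ^ m → 2 * m - 1 ≤ RR := by
    intro h1 h2
    rw [hRR, epairs_LL_eq_cut]
    apply IH
    · rw [← Finset.card_pos, card_image_dn Finset.inter_subset_right]
      exact h1
    · exact ne_univ_of_card_lt (by rwa [card_image_dn Finset.inter_subset_right])
  by_cases hbful : b = 2 ^ m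
  · by_cases ha0 : a = 0
    · omega
    · have h0 := hIH0 (by omega) (by omega)
      omega
  · have h1 := hIH1 (by omega) (by omega)
    by_cases ha0 : a = 0
    · omega
    · have h0 := hIH0 (by omega) (by omega)
      rcases Nat.lt_or_ge m 2 with hm2 | hm2
      · have hm1 : m = 1 := by omega
        subst hm1
        have hp1 : (2:ℕ) ^ 1 = 2 := by norm_num
        have ha1 : a = 1 := by omega
        have hb1' : b = 1 := by omega
        have hmul : a * b = 1 := by rw [ha1, hb1']
        omega
      · omega

lemma EC : ∀ n : ℕ, 1 ≤ n → ∀ S : Finset (V n), S.Nonempty → S ≠ Finset.univ →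
    2 * n - 1 ≤ cutP n S := by
  intro n
  induction n with
  | zero => intro h; omega
  | succ m IH =>
    intro _ S hne hproper
    by_cases hm : m = 0
    · subst hm
      have hlt := card_lt_of_ne_univ hproper
      have hpos := Finset.card_pos.2 hne
      have hp1 : (2:ℕ) ^ 1 = 2 := by norm_num
      have hc1 : S.card = 1 := by omega
      have hg := gen_bound le_rfl S
      rw [hc1] at hg
      show 2 * 1 - 1 ≤ cutP 1 S
      omega
    · have hm1 : 1 ≤ m := by omega
      have IH' := IH hm1
      rcases le_or_gt (S ∩ half m false).card (S ∩ half m true).card with hab | hab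
      · exact EC_aux hm1 IH' S hne hproper hab
      · have h1 : cutP (m + 1) (S.image (flipBit (Fin.last m))) = cutP (m + 1) S :=
          cut_tau hm1 S
        rw [← h1]
        have hcard : (S.image (flipBit (Fin.last m))).card = S.card :=
          Finset.card_image_of_injective _ tau_inj
        refine EC_aux hm1 IH' _ (hne.image _)
          (ne_univ_of_card_lt (by rw [hcard]; exact card_lt_of_ne_univ hproper)) ?_
        rw [card_image_tau_inter_half, card_image_tau_inter_half]
        simpa using hab.le

lemma two_mul_le_two_pow : ∀ k : ℕ, 2 ≤ k → 2 * k ≤ 2 ^ k := by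
  intro k
  induction k with
  | zero => omega
  | succ j IHj =>
    intro h
    by_cases hj : j = 1
    · subst hj; norm_num
    · have h2 : 2 ≤ j := by omega
      have h3 := IHj h2
      have hp : 2 ^ (j + 1) = 2 * 2 ^ j := by rw [pow_succ, mul_comm]
      have h4 : 1 ≤ 2 ^ j := Nat.one_le_two_pow
      omega

lemma ISO_aux {m : ℕ} (hm2 : 2 ≤ m)
    (IH : ∀ S : Finset (V m), 2 ≤ S.card → S.card ≤ 2 ^ (m - 1) → 4 * m - 4 ≤ cutP m S)
    (S : Finset (V (m + 1))) (h3 : 3 ≤ S.card) (hle : S.card ≤ 2 ^ m)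
    (hab : (S ∩ half m false).card ≤ (S ∩ half m true).card) :
    4 * (m + 1) - 4 ≤ cutP (m + 1) S := by
  have hm : 1 ≤ m := by omega
  set a := (S ∩ half m false).card with ha
  set b := (S ∩ half m true).card with hb
  set ta := (Sᶜ ∩ half m false).card with hta
  set tb := (Sᶜ ∩ half m true).card with htb
  have hsplit := cut_split S
  set LL := (epairs (m + 1) (S ∩ half m false) (Sᶜ ∩ half m false)).card with hLL
  set LR := (epairs (m + 1) (S ∩ half m false) (Sᶜ ∩ half m true)).card with hLR
  set RL := (epairs (m + 1) (S ∩ half m true) (Sᶜ ∩ half m false)).card with hRL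
  set RR := (epairs (m + 1) (S ∩ half m true) (Sᶜ ∩ half m true)).card with hRR
  have hca : a + ta = 2 ^ m := card_inter_half_compl false S
  have hcb : b + tb = 2 ^ m := card_inter_half_compl true S
  have hcs : a + b = S.card := card_S_split S
  have hpq : 2 ^ m = 2 * 2 ^ (m - 1) := by
    conv_lhs => rw [show m = (m - 1) + 1 by omega]
    rw [pow_succ, mul_comm]
  have hQ2 : 2 ≤ 2 ^ (m - 1) := by
    calc (2:ℕ) = 2 ^ 1 := by norm_num
      _ ≤ 2 ^ (m - 1) := Nat.pow_le_pow_right (by norm_num) (by omega)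
  have h2m : 2 * m ≤ 2 ^ m := two_mul_le_two_pow m hm2
  have cb1 : 2 * b ≤ RL + 2 * a := cb_S hm true S
  have cb2 : 2 * ta ≤ RL + 2 * tb := cb_T hm true S
  have hEC0 : 1 ≤ a → a < 2 ^ m → 2 * m - 1 ≤ LL := by
    intro h1 h2
    rw [hLL, epairs_LL_eq_cut]
    apply EC m hm
    · rw [← Finset.card_pos, card_image_dn Finset.inter_subset_right]
      exact h1
    · exact ne_univ_of_card_lt (by rwa [card_image_dn Finset.inter_subset_right])
  have hEC1 : 1 ≤ b → b < 2 ^ m → 2 * m - 1 ≤ RR := by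
    intro h1 h2
    rw [hRR, epairs_LL_eq_cut]
    apply EC m hm
    · rw [← Finset.card_pos, card_image_dn Finset.inter_subset_right]
      exact h1
    · exact ne_univ_of_card_lt (by rwa [card_image_dn Finset.inter_subset_right])
  have hISO0 : 2 ≤ a → a ≤ 2 ^ (m - 1) → 4 * m - 4 ≤ LL := by
    intro h1 h2
    rw [hLL, epairs_LL_eq_cut]
    apply IH
    · rwa [card_image_dn Finset.inter_subset_right]
    · rwa [card_image_dn Finset.inter_subset_right]
  have hISO1 : 2 ≤ b → b ≤ 2 ^ (m - 1) → 4 * m - 4 ≤ RR := by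
    intro h1 h2
    rw [hRR, epairs_LL_eq_cut]
    apply IH
    · rwa [card_image_dn Finset.inter_subset_right]
    · rwa [card_image_dn Finset.inter_subset_right]
  by_cases ha0 : a = 0
  · by_cases hbful : b = 2 ^ m
    · omega
    · by_cases hbsm : b ≤ 2 ^ (m - 1)
      · have hi1 := hISO1 (by omega) hbsm
        omega
      · have he1 := hEC1 (by omega) (by omega)
        omega
  · by_cases ha1 : a = 1
    · have he0 := hEC0 (by omega) (by omega)
      have he1 := hEC1 (by omega) (by omega)
      omega
    · by_cases hbsm : b ≤ 2 ^ (m - 1)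
      · have hi0 := hISO0 (by omega) (by omega)
        have hi1 := hISO1 (by omega) hbsm
        omega
      · have hi0 := hISO0 (by omega) (by omega)
        have he1 := hEC1 (by omega) (by omega)
        omega

lemma ISO : ∀ n : ℕ, 2 ≤ n → ∀ S : Finset (V n), 2 ≤ S.card → S.card ≤ 2 ^ (n - 1) →
    4 * n - 4 ≤ cutP n S := by
  intro n hn
  induction n, hn using Nat.le_induction with
  | base =>
    intro S h2 hle
    have hc : S.card = 2 := by
      have : (2:ℕ) ^ (2 - 1) = 2 := by norm_num
      omega
    have hg := gen_bound (by norm_num) S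
    rw [hc] at hg
    omega
  | succ m hm2 IH =>
    intro S h2 hle
    by_cases hc2 : S.card = 2
    · have hg := gen_bound (by omega) S
      rw [hc2] at hg
      omega
    · have h3 : 3 ≤ S.card := by omega
      have hm : 1 ≤ m := by omega
      have hle' : S.card ≤ 2 ^ m := by simpa using hle
      rcases le_or_gt (S ∩ half m false).card (S ∩ half m true).card with hab | hab
      · exact ISO_aux hm2 IH S h3 hle' hab
      · have h1 : cutP (m + 1) (S.image (flipBit (Fin.last m))) = cutP (m + 1) S :=
          cut_tau hm S
        rw [← h1]
        have hcard : (S.image (flipBit (Fin.last m))).card = S.card :=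
          Finset.card_image_of_injective _ tau_inj
        refine ISO_aux hm2 IH _ (by omega) (by omega) ?_
        rw [card_image_tau_inter_half, card_image_tau_inter_half]
        simpa using hab.le

lemma cut_le_ncard {n : ℕ} (F : Set (Sym2 (V n))) (T : Finset (V n))
    (key : ∀ x y : V n, x ∈ T → y ∉ T → (augCube n).Adj x y → s(x, y) ∈ F) :
    cutP n T ≤ F.ncard := by
  have hF : F.Finite := Set.toFinite F
  rw [Set.ncard_eq_toFinset_card F hF]
  apply Finset.card_le_card_of_injOn (fun p => s(p.1, p.2))
  · intro p hp
    rw [Finset.mem_coe, mem_epairs] at hp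
    rw [Finset.mem_coe, Set.Finite.mem_toFinset]
    exact key p.1 p.2 hp.1 (Finset.mem_compl.1 hp.2.1) hp.2.2
  · intro p hp q hq h
    simp only [Finset.mem_coe, mem_epairs] at hp hq
    simp only [Sym2.eq_iff] at h
    rcases h with ⟨h1, h2⟩ | ⟨h1, h2⟩
    · exact Prod.ext h1 h2
    · exact absurd (h1 ▸ hp.1) (Finset.mem_compl.1 hq.2.1)

lemma lower_bound {n : ℕ} (hn : 2 ≤ n) (F : Set (Sym2 (V n)))
    (hdisc : ¬ ((augCube n).deleteEdges F).Connected)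
    (hcomp : ∀ c : ((augCube n).deleteEdges F).ConnectedComponent, 1 < c.supp.ncard) :
    4 * n - 4 ≤ F.ncard := by
  set G' := (augCube n).deleteEdges F with hG'
  have hn1 : (0:ℕ) < n := by omega
  set v₀ : V n := (fun _ => false) with hv₀
  set c := G'.connectedComponentMk v₀ with hc
  have hsuppfin : c.supp.Finite := Set.toFinite _
  set S : Finset (V n) := hsuppfin.toFinset with hS
  have hmemS : ∀ v, v ∈ S ↔ G'.connectedComponentMk v = c := by
    intro v
    rw [hS, Set.Finite.mem_toFinset, SimpleGraph.ConnectedComponent.mem_supp_iff]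
  have key : ∀ x y : V n, x ∈ S → y ∉ S → (augCube n).Adj x y → s(x, y) ∈ F := by
    intro x y hx hy hadj
    by_contra hnF
    have hadj' : G'.Adj x y := SimpleGraph.deleteEdges_adj.2 ⟨hadj, hnF⟩
    have : G'.connectedComponentMk y = c := by
      rw [← (hmemS x).1 hx]
      exact SimpleGraph.ConnectedComponent.sound hadj'.symm.reachable
    exact hy ((hmemS y).2 this)
  have key' : ∀ x y : V n, x ∈ Sᶜ → y ∉ Sᶜ → (augCube n).Adj x y → s(x, y) ∈ F := by
    intro x y hx hy hadj
    rw [Sym2.eq_swap]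
    exact key y x (by simpa using hy) (by simpa using hx) hadj.symm
  have hScard : S.card = c.supp.ncard := by
    rw [Set.ncard_eq_toFinset_card c.supp hsuppfin]
  have hS2 : 2 ≤ S.card := by
    have := hcomp c
    omega
  have hSc2 : 2 ≤ Sᶜ.card := by
    have hex : ∃ u, u ∉ S := by
      by_contra hall
      push_neg at hall
      apply hdisc
      rw [SimpleGraph.connected_iff]
      refine ⟨fun u w => ?_, ⟨v₀⟩⟩
      exact SimpleGraph.ConnectedComponent.exact (((hmemS u).1 (hall u)).trans
        ((hmemS w).1 (hall w)).symm)
    obtain ⟨u, hu⟩ := hex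
    set c' := G'.connectedComponentMk u with hc'
    have hsub : c'.supp ⊆ ↑(Sᶜ) := by
      intro w hw
      rw [SimpleGraph.ConnectedComponent.mem_supp_iff] at hw
      rw [Finset.coe_compl, Set.mem_compl_iff, Finset.mem_coe]
      intro hwS
      apply hu
      rw [hmemS]
      exact hw.symm.trans ((hmemS w).1 hwS)
    have h1 := hcomp c'
    have h2 : c'.supp.ncard ≤ (↑(Sᶜ) : Set (V n)).ncard :=
      Set.ncard_le_ncard hsub (Set.toFinite _)
    rw [Set.ncard_coe_finset] at h2
    omega
  have hcardV : Fintype.card (V n) = 2 ^ n := by simp [Fintype.card_fun]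
  have hcompl : S.card + Sᶜ.card = 2 ^ n := by
    have := Finset.card_compl (s := S) (α := V n)
    omega
  have hpq : (2:ℕ) ^ n = 2 * 2 ^ (n - 1) := by
    conv_lhs => rw [show n = (n - 1) + 1 by omega]
    rw [pow_succ, mul_comm]
  by_cases hsmall : S.card ≤ 2 ^ (n - 1)
  · calc 4 * n - 4 ≤ cutP n S := ISO n hn S hS2 hsmall
      _ ≤ F.ncard := cut_le_ncard F S key
  · have h1 : Sᶜ.card ≤ 2 ^ (n - 1) := by omega
    calc 4 * n - 4 ≤ cutP n Sᶜ := ISO n hn Sᶜ hSc2 h1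
      _ ≤ F.ncard := cut_le_ncard F Sᶜ key'

lemma sym2_pair_inj {α : Type*} {x a b : α} (h : s(x, a) = s(x, b)) : a = b := by
  rw [Sym2.eq_iff] at h
  rcases h with ⟨-, h⟩ | ⟨h1, h2⟩
  · exact h
  · rw [h2, ← h1]

lemma upper_bound {n : ℕ} (hn : 2 ≤ n) :
    ∃ F : Set (Sym2 (V n)), F ⊆ (augCube n).edgeSet ∧ F.ncard = 4 * n - 4 ∧
      ¬ ((augCube n).deleteEdges F).Connected ∧
      ∀ c : ((augCube n).deleteEdges F).ConnectedComponent, 1 < c.supp.ncard := by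
  have hn1 : (0:ℕ) < n := by omega
  have hn2 : (1:ℕ) < n := by omega
  set i0 : Fin n := ⟨0, hn1⟩ with hi0
  set i1 : Fin n := ⟨1, hn2⟩ with hi1
  set X : V n := (fun _ => false) with hX
  set Y : V n := flipBit i0 X with hY
  have hXY : X ≠ Y := (flipBit_ne i0 X).symm
  have hadjXY : (augCube n).Adj X Y := (adj_iff X Y).2 (Or.inl ⟨i0, rfl⟩)
  set Fedge : Finset (Sym2 (V n)) :=
    (((Finset.univ.filter (fun z => (augCube n).Adj X z)).erase Y).image (fun z => s(X, z))) ∪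
    (((Finset.univ.filter (fun z => (augCube n).Adj Y z)).erase X).image (fun z => s(Y, z)))
      with hFedge
  have hmemF : ∀ e, e ∈ Fedge ↔
      ((∃ z, (augCube n).Adj X z ∧ z ≠ Y ∧ e = s(X, z)) ∨
       (∃ z, (augCube n).Adj Y z ∧ z ≠ X ∧ e = s(Y, z))) := by
    intro e
    rw [hFedge, Finset.mem_union, Finset.mem_image, Finset.mem_image]
    constructor
    · rintro (⟨z, hz, rfl⟩ | ⟨z, hz, rfl⟩) <;>
        rw [Finset.mem_erase, Finset.mem_filter] at hz
      · exact Or.inl ⟨z, hz.2.2, hz.1, rfl⟩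
      · exact Or.inr ⟨z, hz.2.2, hz.1, rfl⟩
    · rintro (⟨z, h1, h2, rfl⟩ | ⟨z, h1, h2, rfl⟩)
      · exact Or.inl ⟨z, by simp [Finset.mem_erase, h1, h2], rfl⟩
      · exact Or.inr ⟨z, by simp [Finset.mem_erase, h1, h2], rfl⟩
  -- membership facts
  have hinX : ∀ z, z ≠ Y → (augCube n).Adj X z → s(X, z) ∈ Fedge := by
    intro z h1 h2
    exact (hmemF _).2 (Or.inl ⟨z, h2, h1, rfl⟩)
  have hinY : ∀ z, z ≠ X → (augCube n).Adj Y z → s(Y, z) ∈ Fedge := by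
    intro z h1 h2
    exact (hmemF _).2 (Or.inr ⟨z, h2, h1, rfl⟩)
  have hnotXY : s(X, Y) ∉ Fedge := by
    intro h
    rcases (hmemF _).1 h with ⟨z, h1, h2, h3⟩ | ⟨z, h1, h2, h3⟩
    · rw [Sym2.eq_iff] at h3
      rcases h3 with ⟨-, hz⟩ | ⟨-, h5⟩
      · exact h2 hz.symm
      · exact hXY h5.symm
    · rw [Sym2.eq_iff] at h3
      rcases h3 with ⟨h4, -⟩ | ⟨h4, -⟩
      · exact hXY h4
      · exact h2 h4.symm
  have hout : ∀ u v : V n, u ≠ X → u ≠ Y → v ≠ X → v ≠ Y → s(u, v) ∉ Fedge := by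
    intro u v hu1 hu2 hv1 hv2 h
    rcases (hmemF _).1 h with ⟨z, -, -, h3⟩ | ⟨z, -, -, h3⟩ <;> rw [Sym2.eq_iff] at h3
    · rcases h3 with ⟨h4, -⟩ | ⟨-, h5⟩
      · exact hu1 h4
      · exact hv1 h5
    · rcases h3 with ⟨h4, -⟩ | ⟨-, h5⟩
      · exact hu2 h4
      · exact hv2 h5
  set G' := (augCube n).deleteEdges (↑Fedge : Set (Sym2 (V n))) with hG'
  have hadj'XY : G'.Adj X Y := by
    rw [hG', SimpleGraph.deleteEdges_adj]
    exact ⟨hadjXY, by simpa using hnotXY⟩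
  have hclosed : ∀ (u v : V n), G'.Walk u v → (u = X ∨ u = Y) → (v = X ∨ v = Y) := by
    intro u v w
    induction w with
    | nil => exact id
    | cons hadj p IH =>
      rename_i u' w' v'
      intro hu
      apply IH
      by_contra hw
      push_neg at hw
      rw [hG', SimpleGraph.deleteEdges_adj] at hadj
      apply hadj.2
      rcases hu with rfl | rfl
      · exact Finset.mem_coe.2 (hinX w' hw.2 hadj.1)
      · exact Finset.mem_coe.2 (hinY w' hw.1 hadj.1)
  have hpair : ∀ (s : Set (V n)) (x y : V n), x ∈ s → y ∈ s → x ≠ y → 1 < s.ncard := by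
    intro s x y hx hy hne
    have hsub : ({x, y} : Set (V n)) ⊆ s := by
      intro z hz
      rcases hz with rfl | rfl
      · exact hx
      · exact hy
    have h2 : ({x, y} : Set (V n)).ncard = 2 := Set.ncard_pair hne
    have := Set.ncard_le_ncard hsub (Set.toFinite s)
    omega
  refine ⟨↑Fedge, ?_, ?_, ?_, ?_⟩
  · -- subset of edgeSet
    intro e he
    rw [Finset.mem_coe] at he
    rcases (hmemF e).1 he with ⟨z, h1, -, rfl⟩ | ⟨z, h1, -, rfl⟩ <;>
      exact (augCube n).mem_edgeSet.2 h1
  · -- cardinality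
    rw [Set.ncard_coe_finset]
    rw [hFedge, Finset.card_union_of_disjoint, Finset.card_image_of_injOn,
      Finset.card_image_of_injOn]
    · rw [Finset.card_erase_of_mem, Finset.card_erase_of_mem, card_nbr (by omega),
        card_nbr (by omega)]
      · omega
      · exact Finset.mem_filter.2 ⟨Finset.mem_univ _, hadjXY.symm⟩
      · exact Finset.mem_filter.2 ⟨Finset.mem_univ _, hadjXY⟩
    · exact fun a _ b _ h => sym2_pair_inj h
    · exact fun a _ b _ h => sym2_pair_inj h
    · rw [Finset.disjoint_left]
      rintro e he1 he2
      rw [Finset.mem_image] at he1 he2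
      obtain ⟨z, hz, rfl⟩ := he1
      obtain ⟨z', hz', heq⟩ := he2
      rw [Finset.mem_erase] at hz hz'
      rw [Sym2.eq_iff] at heq
      rcases heq with ⟨h4, -⟩ | ⟨-, h4⟩
      · exact hXY h4.symm
      · exact hz'.1 h4
  · -- disconnected
    intro hcon
    set T : V n := (fun _ => true) with hT
    have hTX : T ≠ X := by
      intro h
      have := congrFun h i0
      simp [hT, hX] at this
    have hTY : T ≠ Y := by
      intro h
      have := congrFun h i1
      have h10 : i1 ≠ i0 := by
        intro hh
        rw [hi1, hi0] at hh
        exact absurd (congrArg Fin.val hh) (by norm_num)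
      simp [hT, hY, hX, flipBit, h10] at this
    obtain ⟨w⟩ := hcon.preconnected X T
    rcases hclosed X T w (Or.inl rfl) with h | h
    · exact hTX h
    · exact hTY h
  · -- all components have > 1 vertex
    intro c
    obtain ⟨v, hv⟩ := c.exists_rep
    by_cases hvX : v = X ∨ v = Y
    · have hXs : X ∈ c.supp := by
        rw [SimpleGraph.ConnectedComponent.mem_supp_iff, ← hv]
        rcases hvX with rfl | rfl
        · rfl
        · exact SimpleGraph.ConnectedComponent.sound hadj'XY.reachable
      have hYs : Y ∈ c.supp := by
        rw [SimpleGraph.ConnectedComponent.mem_supp_iff, ← hv]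
        rcases hvX with rfl | rfl
        · exact SimpleGraph.ConnectedComponent.sound hadj'XY.symm.reachable
        · rfl
      exact hpair _ X Y hXs hYs hXY
    · push_neg at hvX
      set w := flipBit i0 v with hw
      have hvw : v = flipBit i0 w := by rw [hw, flipBit_flipBit]
      have hwX : w ≠ X := by
        intro h
        apply hvX.2
        rw [hvw, h]
      have hwY : w ≠ Y := by
        intro h
        apply hvX.1
        rw [hvw, h, hY, flipBit_flipBit]
      have hadjvw : G'.Adj v w := by
        rw [hG', SimpleGraph.deleteEdges_adj]
        refine ⟨(adj_iff v w).2 (Or.inl ⟨i0, rfl⟩), ?_⟩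
        rw [Finset.mem_coe]
        exact hout v w hvX.1 hvX.2 hwX hwY
      have hvs : v ∈ c.supp := by
        rw [SimpleGraph.ConnectedComponent.mem_supp_iff]
        exact hv
      have hws : w ∈ c.supp := by
        rw [SimpleGraph.ConnectedComponent.mem_supp_iff, ← hv]
        exact SimpleGraph.ConnectedComponent.sound hadjvw.symm.reachable
      exact hpair _ v w hvs hws (flipBit_ne i0 v).symm

/-- For every `n ≥ 2`, the 1-extra edge-connectivity of `AQ_n` equals `4n - 4`: the minimum
cardinality of an edge set `F` such that `AQ_n - F` is disconnected and every connected
component of `AQ_n - F` has more than one vertex equals `4n - 4`. -/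
theorem augCube_lambda_one (n : ℕ) (hn : 2 ≤ n) :
    IsLeast {k : ℕ | ∃ F : Set (Sym2 (Fin n → Bool)), F ⊆ (augCube n).edgeSet ∧
      F.ncard = k ∧ ¬ ((augCube n).deleteEdges F).Connected ∧
      ∀ c : ((augCube n).deleteEdges F).ConnectedComponent, 1 < c.supp.ncard} (4 * n - 4) := by
  constructor
  · obtain ⟨F, h1, h2, h3, h4⟩ := upper_bound hn
    exact ⟨F, h1, h2, h3, h4⟩
  · rintro k ⟨F, -, hcard, hdisc, hcomp⟩
    rw [← hcard]
    exact lower_bound hn F hdisc hcomp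
end

section
/- For every n ≥ 3, any two distinct vertices of the augmented cube AQ_n have at most four common neighbors. -/
namespace AQaux

variable {n : ℕ}

def eps (i : Fin n) : Fin n → Bool := fun j => decide (j = i)

def del (i : Fin n) : Fin n → Bool := fun j => decide (j ≤ i)

def Spat (p : Fin n → Bool) : Prop :=
  (∃ i, p = eps i) ∨ (∃ i : Fin n, 1 ≤ i.val ∧ p = del i)

lemma xor_shift {x y z : Bool} (h : xor x y = z) : y = xor x z := by
  cases x <;> simp_all

lemma xor_shift' {x y z : Bool} (h : xor x y = z) : x = xor z y := by
  cases x <;> cases y <;> simp_all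

lemma bxor_decide {P Q : Prop} [Decidable P] [Decidable Q] {b : Bool}
    (h : b = xor (decide P) (decide Q)) : b = true ↔ ¬(P ↔ Q) := by
  subst h; by_cases hP : P <;> by_cases hQ : Q <;> simp [hP, hQ]

lemma hD_ee {D : Fin n → Bool} {a c : Fin n}
    (hq : (fun j => xor (eps a j) (D j)) = eps c) :
    ∀ j : Fin n, D j = true ↔ ¬((j.val = a.val) ↔ (j.val = c.val)) := by
  intro j
  have h := bxor_decide (P := j = a) (Q := j = c) (xor_shift (congrFun hq j))
  simpa only [Fin.ext_iff] using h

lemma hD_ed {D : Fin n → Bool} {a c : Fin n}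
    (hq : (fun j => xor (eps a j) (D j)) = del c) :
    ∀ j : Fin n, D j = true ↔ ¬((j.val = a.val) ↔ (j.val ≤ c.val)) := by
  intro j
  have h := bxor_decide (P := j = a) (Q := j ≤ c) (xor_shift (congrFun hq j))
  simpa only [Fin.ext_iff, Fin.le_def] using h

lemma hD_de {D : Fin n → Bool} {a c : Fin n}
    (hq : (fun j => xor (del a j) (D j)) = eps c) :
    ∀ j : Fin n, D j = true ↔ ¬((j.val ≤ a.val) ↔ (j.val = c.val)) := by
  intro j
  have h := bxor_decide (P := j ≤ a) (Q := j = c) (xor_shift (congrFun hq j))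
  simpa only [Fin.ext_iff, Fin.le_def] using h

lemma hD_dd {D : Fin n → Bool} {a c : Fin n}
    (hq : (fun j => xor (del a j) (D j)) = del c) :
    ∀ j : Fin n, D j = true ↔ ¬((j.val ≤ a.val) ↔ (j.val ≤ c.val)) := by
  intro j
  have h := bxor_decide (P := j ≤ a) (Q := j ≤ c) (xor_shift (congrFun hq j))
  simpa only [Fin.le_def] using h



section Shapes

variable {D : Fin n → Bool} {m : Fin n}

lemma shape2 (hm : D m = true) {a c : Fin n} (ham : a ≠ m)
    (hq : (fun j => xor (eps a j) (D j)) = eps c) :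
    ∀ j : Fin n, D j = true ↔ (j.val = a.val ∨ j.val = m.val) := by
  have hD := hD_ee hq
  have ham' : a.val ≠ m.val := fun h => ham (Fin.ext h)
  have hcm : c.val = m.val := by have h1 := (hD m).mp hm; omega
  intro j
  rw [hD j]
  omega

lemma shape3 (hm : D m = true) (hmax : ∀ j, D j = true → j ≤ m)
    {a c : Fin n} (ham : a ≠ m)
    (hq : (fun j => xor (eps a j) (D j)) = del c) :
    (a.val < m.val ∧ ∀ j : Fin n, D j = true ↔ (j.val ≤ m.val ∧ j.val ≠ a.val))
      ∨ (m.val < a.val ∧ ∀ j : Fin n, D j = true ↔ j.val < a.val) := by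
  have hD := hD_ed hq
  have ham' : a.val ≠ m.val := fun h => ham (Fin.ext h)
  have hmax' : ∀ j : Fin n, D j = true → j.val ≤ m.val := fun j h => hmax j h
  have hmk : m.val ≤ c.val := by have h1 := (hD m).mp hm; omega
  rcases eq_or_lt_of_le hmk with heq | hlt
  · left
    have haec : a.val ≤ m.val := by
      by_contra hgt
      have h2 : D a = true := (hD a).mpr (by omega)
      exact hgt (hmax' a h2)
    refine ⟨by omega, fun j => ?_⟩
    rw [hD j]; omega
  · right
    have hDc : ¬ D c = true := fun h => by have := hmax' c h; omega
    have hac : a.val = c.val := by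
      by_contra hne
      exact hDc ((hD c).mpr (by omega))
    refine ⟨by omega, fun j => ?_⟩
    rw [hD j]; omega

lemma shape4 (hm : D m = true) (hmax : ∀ j, D j = true → j ≤ m)
    {a : Fin n} (ham : a < m)
    (hq : Spat (fun j => xor (del a j) (D j))) :
    (∀ j : Fin n, D j = true ↔ (j.val ≤ a.val ∨ j.val = m.val))
      ∨ (∀ j : Fin n, D j = true ↔ (a.val < j.val ∧ j.val ≤ m.val)) := by
  have ham' : a.val < m.val := ham
  have hmax' : ∀ j : Fin n, D j = true → j.val ≤ m.val := fun j h => hmax j h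
  rcases hq with ⟨c, hc⟩ | ⟨c, hc1, hc⟩
  · left
    have hD := hD_de hc
    have hcm : c.val = m.val := by have h1 := (hD m).mp hm; omega
    intro j; rw [hD j]; omega
  · right
    have hD := hD_dd hc
    have hmc : m.val ≤ c.val := by have h1 := (hD m).mp hm; omega
    have hcm : c.val = m.val := by
      by_contra hne
      have h2 : D c = true := (hD c).mpr (by omega)
      have := hmax' c h2; omega
    intro j; rw [hD j]; omega

lemma shape5 (hm : D m = true) (hmax : ∀ j, D j = true → j ≤ m)
    {a : Fin n} (ham : m ≤ a)
    (hq : Spat (fun j => xor (del a j) (D j))) :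
    (a = m ∧
      ((∃ c : Fin n, c.val < m.val ∧
          ∀ j : Fin n, D j = true ↔ (j.val ≤ m.val ∧ j.val ≠ c.val))
        ∨ (∃ c : Fin n, 1 ≤ c.val ∧ c.val < m.val ∧
          ∀ j : Fin n, D j = true ↔ (c.val < j.val ∧ j.val ≤ m.val))))
      ∨ (m.val < a.val ∧ ∀ j : Fin n, D j = true ↔ j.val < a.val) := by
  have ham' : m.val ≤ a.val := ham
  have hmax' : ∀ j : Fin n, D j = true → j.val ≤ m.val := fun j h => hmax j h
  rcases hq with ⟨c, hc⟩ | ⟨c, hc1, hc⟩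
  · have hD := hD_de hc
    have hca : c.val ≤ a.val := by
      by_contra hgt
      have h2 : D c = true := (hD c).mpr (by omega)
      have := hmax' c h2; omega
    rcases eq_or_lt_of_le ham' with heq | hlt
    · left
      have hcm : c.val ≠ m.val := by
        have h1 := (hD m).mp hm; omega
      refine ⟨Fin.ext heq.symm, Or.inl ⟨c, by omega, fun j => ?_⟩⟩
      rw [hD j]; omega
    · right
      have hDa : ¬ D a = true := fun h => by have := hmax' a h; omega
      have hac : a.val = c.val := by
        by_contra hne
        exact hDa ((hD a).mpr (by omega))
      refine ⟨hlt, fun j => ?_⟩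
      rw [hD j]; omega
  · have hD := hD_dd hc
    have hcm : c.val < m.val := by have h1 := (hD m).mp hm; omega
    have ham2 : a.val = m.val := by
      by_contra hne
      have hDa : ¬ D a = true := fun h => by have := hmax' a h; omega
      exact hDa ((hD a).mpr (by omega))
    left
    refine ⟨Fin.ext ham2, Or.inr ⟨c, hc1, hcm, fun j => ?_⟩⟩
    rw [hD j]; omega

end Shapes

section Uniq

variable {D : Fin n → Bool} {m : Fin n}

lemma uniq2 (hm : D m = true) {a b c d : Fin n} (ha : a ≠ m) (hb : b ≠ m)
    (hqa : (fun j => xor (eps a j) (D j)) = eps c)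
    (hqb : (fun j => xor (eps b j) (D j)) = eps d) : a = b := by
  have sa := shape2 hm ha hqa
  have sb := shape2 hm hb hqb
  have ha' : a.val ≠ m.val := fun h => ha (Fin.ext h)
  have h1 : D a = true := (sa a).mpr (Or.inl rfl)
  have h2 := (sb a).mp h1
  exact Fin.ext (by omega)

lemma uniq3 (hm : D m = true) (hmax : ∀ j, D j = true → j ≤ m)
    {a b c d : Fin n} (ha : a ≠ m) (hb : b ≠ m)
    (hqa : (fun j => xor (eps a j) (D j)) = del c)
    (hqb : (fun j => xor (eps b j) (D j)) = del d) : a = b := by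
  have sa := shape3 hm hmax ha hqa
  have sb := shape3 hm hmax hb hqb
  rcases sa with ⟨ha1, sa⟩ | ⟨ha1, sa⟩ <;> rcases sb with ⟨hb1, sb⟩ | ⟨hb1, sb⟩
  · have hDa : ¬ D a = true := fun h => by have := (sa a).mp h; omega
    have h3 : ¬(a.val ≤ m.val ∧ a.val ≠ b.val) := fun hc => hDa ((sb a).mpr hc)
    exact Fin.ext (by omega)
  · have hDa : ¬ D a = true := fun h => by have := (sa a).mp h; omega
    have h3 : D a = true := (sb a).mpr (by omega)
    exact absurd h3 hDa
  · have hDb : ¬ D b = true := fun h => by have := (sb b).mp h; omega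
    have h3 : D b = true := (sa b).mpr (by omega)
    exact absurd h3 hDb
  · have hDa : ¬ D a = true := fun h => by have := (sa a).mp h; omega
    have hDb : ¬ D b = true := fun h => by have := (sb b).mp h; omega
    have h3 : ¬ a.val < b.val := fun hc => hDa ((sb a).mpr hc)
    have h4 : ¬ b.val < a.val := fun hc => hDb ((sa b).mpr hc)
    exact Fin.ext (by omega)

lemma uniq4 (hn : 3 ≤ n) (hm : D m = true) (hmax : ∀ j, D j = true → j ≤ m)
    {a b : Fin n} (ha1 : 1 ≤ a.val) (ha2 : a < m) (hb1 : 1 ≤ b.val) (hb2 : b < m)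
    (hqa : Spat (fun j => xor (del a j) (D j)))
    (hqb : Spat (fun j => xor (del b j) (D j))) : a = b := by
  have ha2' : a.val < m.val := ha2
  have hb2' : b.val < m.val := hb2
  have z0 : Fin n := ⟨0, by omega⟩
  have sa := shape4 hm hmax ha2 hqa
  have sb := shape4 hm hmax hb2 hqb
  rcases sa with sa | sa <;> rcases sb with sb | sb
  · have h1 : D b = true := (sb b).mpr (Or.inl le_rfl)
    have h2 := (sa b).mp h1
    have h3 : D a = true := (sa a).mpr (Or.inl le_rfl)
    have h4 := (sb a).mp h3
    exact Fin.ext (by omega)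
  · have h1 : D (⟨0, by omega⟩ : Fin n) = true := (sa ⟨0, by omega⟩).mpr (by simp)
    have h2 := (sb ⟨0, by omega⟩).mp h1
    simp at h2
  · have h1 : D (⟨0, by omega⟩ : Fin n) = true := (sb ⟨0, by omega⟩).mpr (by simp)
    have h2 := (sa ⟨0, by omega⟩).mp h1
    simp at h2
  · have hDa : ¬ D a = true := fun h => by have := (sa a).mp h; omega
    have hDb : ¬ D b = true := fun h => by have := (sb b).mp h; omega
    have h3 : ¬(a.val < b.val) := fun hc => hDb ((sa b).mpr (by omega))
    have h4 : ¬(b.val < a.val) := fun hc => hDa ((sb a).mpr (by omega))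
    exact Fin.ext (by omega)

lemma uniq5 (hm : D m = true) (hmax : ∀ j, D j = true → j ≤ m)
    {a b : Fin n} (ha1 : 1 ≤ a.val) (ha2 : m ≤ a) (hb1 : 1 ≤ b.val) (hb2 : m ≤ b)
    (hqa : Spat (fun j => xor (del a j) (D j)))
    (hqb : Spat (fun j => xor (del b j) (D j))) : a = b := by
  have sa := shape5 hm hmax ha2 hqa
  have sb := shape5 hm hmax hb2 hqb
  have key : ∀ {x y : Fin n},
      (x = m ∧ ((∃ c : Fin n, c.val < m.val ∧
          ∀ j : Fin n, D j = true ↔ (j.val ≤ m.val ∧ j.val ≠ c.val))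
        ∨ (∃ c : Fin n, 1 ≤ c.val ∧ c.val < m.val ∧
          ∀ j : Fin n, D j = true ↔ (c.val < j.val ∧ j.val ≤ m.val)))) →
      (m.val < y.val ∧ ∀ j : Fin n, D j = true ↔ j.val < y.val) → False := by
    rintro x y ⟨rfl, hsub | hsub⟩ ⟨hy1, hy2⟩
    · obtain ⟨c, hc1, hc2⟩ := hsub
      have h1 : D c = true := (hy2 c).mpr (by omega)
      have h2 := (hc2 c).mp h1
      omega
    · obtain ⟨c, hc0, hc1, hc2⟩ := hsub
      have hn0 : 0 < n := by omega
      have h1 : D (⟨0, by omega⟩ : Fin n) = true := (hy2 ⟨0, by omega⟩).mpr (by simp; omega)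
      have h2 := (hc2 ⟨0, by omega⟩).mp h1
      simp at h2
  rcases sa with sa | sa <;> rcases sb with sb | sb
  · rw [sa.1, sb.1]
  · exact absurd (key sa sb) (fun h => h)
  · exact absurd (key sb sa) (fun h => h)
  · obtain ⟨ha3, sa'⟩ := sa
    obtain ⟨hb3, sb'⟩ := sb
    have hDa : ¬ D a = true := fun h => by have := (sa' a).mp h; omega
    have hDb : ¬ D b = true := fun h => by have := (sb' b).mp h; omega
    have h3 : ¬(a.val < b.val) := fun hc => hDa ((sb' a).mpr hc)
    have h4 : ¬(b.val < a.val) := fun hc => hDb ((sa' b).mpr hc)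
    exact Fin.ext (by omega)

lemma excl (hn : 3 ≤ n) (hm : D m = true) (hmax : ∀ j, D j = true → j ≤ m)
    (h2 : ∃ a c : Fin n, a ≠ m ∧ (fun j => xor (eps a j) (D j)) = eps c)
    (h3 : ∃ a c : Fin n, a ≠ m ∧ 1 ≤ c.val ∧ (fun j => xor (eps a j) (D j)) = del c)
    (h4 : ∃ a : Fin n, 1 ≤ a.val ∧ a < m ∧ Spat (fun j => xor (del a j) (D j))) :
    False := by
  obtain ⟨a, c, ha, hqa⟩ := h2
  have s2 := shape2 hm ha hqa
  have ha' : a.val ≠ m.val := fun h => ha (Fin.ext h)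
  obtain ⟨b, hb1, hbm, hqb⟩ := h4
  have hbm' : b.val < m.val := hbm
  have s4 := shape4 hm hmax hbm hqb
  have z0 : Fin n := ⟨0, by omega⟩
  rcases s4 with s4 | s4
  · have d0 : D (⟨0, by omega⟩ : Fin n) = true := (s4 ⟨0, by omega⟩).mpr (by simp)
    have d1 : D (⟨1, by omega⟩ : Fin n) = true := (s4 ⟨1, by omega⟩).mpr (by simp; omega)
    have e0 := (s2 ⟨0, by omega⟩).mp d0
    have e1 := (s2 ⟨1, by omega⟩).mp d1
    simp at e0 e1
    omega
  · have da : D a = true := (s2 a).mpr (Or.inl rfl)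
    have hrange := (s4 a).mp da
    obtain ⟨a', c', ha2, hc1', hq'⟩ := h3
    have s3 := shape3 hm hmax ha2 hq'
    rcases s3 with ⟨_, s3⟩ | ⟨hma', s3⟩
    · have d0f : ¬ D (⟨0, by omega⟩ : Fin n) = true := fun h => by
        have := (s4 ⟨0, by omega⟩).mp h; simp at this
      have h0 : ¬((0 : ℕ) ≤ m.val ∧ (0:ℕ) ≠ a'.val) := fun hc => d0f ((s3 ⟨0, by omega⟩).mpr hc)
      have d1f : ¬ D (⟨1, by omega⟩ : Fin n) = true := fun h => by
        have := (s4 ⟨1, by omega⟩).mp h; simp at this; omega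
      have h1 : ¬((1 : ℕ) ≤ m.val ∧ (1:ℕ) ≠ a'.val) := fun hc => d1f ((s3 ⟨1, by omega⟩).mpr hc)
      omega
    · have d0 : D (⟨0, by omega⟩ : Fin n) = true := (s3 ⟨0, by omega⟩).mpr (by simp; omega)
      have h1 := (s4 ⟨0, by omega⟩).mp d0
      simp at h1

end Uniq

lemma ncard_le_four {α : Type*} [Nonempty α] (T : Set α) (Q1 Q2 Q3 Q4 : α → Prop)
    (cover : ∀ p ∈ T, Q1 p ∨ Q2 p ∨ Q3 p ∨ Q4 p)
    (u1 : ∀ p q, Q1 p → Q1 q → p = q) (u2 : ∀ p q, Q2 p → Q2 q → p = q)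
    (u3 : ∀ p q, Q3 p → Q3 q → p = q) (u4 : ∀ p q, Q4 p → Q4 q → p = q) :
    T.ncard ≤ 4 := by
  classical
  let c : (α → Prop) → α := fun Q => if h : ∃ p, Q p then h.choose else Classical.arbitrary α
  have hc : ∀ (Q : α → Prop), (∀ p q, Q p → Q q → p = q) → ∀ p, Q p → p = c Q := by
    intro Q hu p hp
    have he : ∃ p, Q p := ⟨p, hp⟩
    simp only [c, dif_pos he]
    exact hu p _ hp he.choose_spec
  have hsub : T ⊆ {c Q1, c Q2, c Q3, c Q4} := by
    intro p hp
    rcases cover p hp with h | h | h | h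
    · exact Or.inl (hc Q1 u1 p h)
    · exact Or.inr (Or.inl (hc Q2 u2 p h))
    · exact Or.inr (Or.inr (Or.inl (hc Q3 u3 p h)))
    · exact Or.inr (Or.inr (Or.inr (hc Q4 u4 p h)))
  have hfin : ({c Q1, c Q2, c Q3, c Q4} : Set α).Finite := by
    exact (Set.finite_singleton _).insert _ |>.insert _ |>.insert _
  have hb := Set.ncard_le_ncard hsub hfin
  have t3 := Set.ncard_insert_le (c Q3) ({c Q4} : Set α)
  have t2 := Set.ncard_insert_le (c Q2) ({c Q3, c Q4} : Set α)
  have t1 := Set.ncard_insert_le (c Q1) ({c Q2, c Q3, c Q4} : Set α)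
  have ts : ({c Q4} : Set α).ncard = 1 := Set.ncard_singleton _
  omega

lemma main_s8 (hn : 3 ≤ n) (D : Fin n → Bool) (m : Fin n) (hm : D m = true)
    (hmax : ∀ j, D j = true → j ≤ m) :
    {p : Fin n → Bool | Spat p ∧ Spat (fun j => xor (p j) (D j))}.ncard ≤ 4 := by
  classical
  set Q1 : (Fin n → Bool) → Prop := fun p => p = eps m with hQ1
  set Q2 : (Fin n → Bool) → Prop := fun p =>
    ∃ a c : Fin n, a ≠ m ∧ p = eps a ∧ (fun j => xor (eps a j) (D j)) = eps c with hQ2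
  set Q3 : (Fin n → Bool) → Prop := fun p =>
    ∃ a c : Fin n, a ≠ m ∧ 1 ≤ c.val ∧ p = eps a ∧
      (fun j => xor (eps a j) (D j)) = del c with hQ3
  set Q4 : (Fin n → Bool) → Prop := fun p =>
    ∃ a : Fin n, 1 ≤ a.val ∧ a < m ∧ p = del a ∧
      Spat (fun j => xor (del a j) (D j)) with hQ4
  set Q5 : (Fin n → Bool) → Prop := fun p =>
    ∃ a : Fin n, 1 ≤ a.val ∧ m ≤ a ∧ p = del a ∧
      Spat (fun j => xor (del a j) (D j)) with hQ5
  have cover : ∀ p, Spat p ∧ Spat (fun j => xor (p j) (D j)) →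
      Q1 p ∨ Q2 p ∨ Q3 p ∨ Q4 p ∨ Q5 p := by
    rintro p ⟨hp, hq⟩
    rcases hp with ⟨i, rfl⟩ | ⟨i, hi1, rfl⟩
    · by_cases him : i = m
      · exact Or.inl (by rw [him])
      · rcases hq with ⟨c, hc⟩ | ⟨c, hc1, hc⟩
        · exact Or.inr (Or.inl ⟨i, c, him, rfl, hc⟩)
        · exact Or.inr (Or.inr (Or.inl ⟨i, c, him, hc1, rfl, hc⟩))
    · rcases lt_or_ge i m with him | him
      · exact Or.inr (Or.inr (Or.inr (Or.inl ⟨i, hi1, him, rfl, hq⟩)))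
      · exact Or.inr (Or.inr (Or.inr (Or.inr ⟨i, hi1, him, rfl, hq⟩)))
  have u1 : ∀ p q, Q1 p → Q1 q → p = q := fun p q hp hq => by rw [hp, hq]
  have u2 : ∀ p q, Q2 p → Q2 q → p = q := by
    rintro p q ⟨a, c, ha, rfl, hc⟩ ⟨b, d, hb, rfl, hd⟩
    rw [uniq2 hm ha hb hc hd]
  have u3 : ∀ p q, Q3 p → Q3 q → p = q := by
    rintro p q ⟨a, c, ha, hc1, rfl, hc⟩ ⟨b, d, hb, hd1, rfl, hd⟩
    rw [uniq3 hm hmax ha hb hc hd]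
  have u4 : ∀ p q, Q4 p → Q4 q → p = q := by
    rintro p q ⟨a, ha1, ha2, rfl, hc⟩ ⟨b, hb1, hb2, rfl, hd⟩
    rw [uniq4 hn hm hmax ha1 ha2 hb1 hb2 hc hd]
  have u5 : ∀ p q, Q5 p → Q5 q → p = q := by
    rintro p q ⟨a, ha1, ha2, rfl, hc⟩ ⟨b, hb1, hb2, rfl, hd⟩
    rw [uniq5 hm hmax ha1 ha2 hb1 hb2 hc hd]
  by_cases hb : (∃ p, Q2 p) ∧ (∃ p, Q3 p)
  · obtain ⟨⟨p2, a2, c2, ha2, hp2, hc2⟩, ⟨p3, a3, c3, ha3, hc31, hp3, hc3⟩⟩ := hb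
    refine ncard_le_four _ Q1 Q2 Q3 Q5 ?_ u1 u2 u3 u5
    intro p hp
    rcases cover p hp with h | h | h | h | h
    · exact Or.inl h
    · exact Or.inr (Or.inl h)
    · exact Or.inr (Or.inr (Or.inl h))
    · exact absurd (excl hn hm hmax ⟨a2, c2, ha2, hc2⟩ ⟨a3, c3, ha3, hc31, hc3⟩
        (by obtain ⟨a, ha1', ha2', _, hq⟩ := h; exact ⟨a, ha1', ha2', hq⟩)) (fun hf => hf)
    · exact Or.inr (Or.inr (Or.inr h))
  · rw [not_and_or] at hb
    rcases hb with hb | hb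
    · refine ncard_le_four _ Q1 Q3 Q4 Q5 ?_ u1 u3 u4 u5
      intro p hp
      rcases cover p hp with h | h | h | h | h
      · exact Or.inl h
      · exact absurd ⟨p, h⟩ hb
      · exact Or.inr (Or.inl h)
      · exact Or.inr (Or.inr (Or.inl h))
      · exact Or.inr (Or.inr (Or.inr h))
    · refine ncard_le_four _ Q1 Q2 Q4 Q5 ?_ u1 u2 u4 u5
      intro p hp
      rcases cover p hp with h | h | h | h | h
      · exact Or.inl h
      · exact Or.inr (Or.inl h)
      · exact absurd ⟨p, h⟩ hb
      · exact Or.inr (Or.inr (Or.inl h))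
      · exact Or.inr (Or.inr (Or.inr h))

lemma adj_iff (X Z : Fin n → Bool) :
    (augCube n).Adj X Z ↔ Spat (fun j => xor (Z j) (X j)) := by
  constructor
  · rintro ⟨-, ⟨i, rfl⟩ | ⟨i, hi, rfl⟩⟩
    · refine Or.inl ⟨i, ?_⟩
      funext j
      by_cases h : j = i <;> simp [flipBit, eps, h] <;> cases X j <;> rfl
    · refine Or.inr ⟨i, hi, ?_⟩
      funext j
      by_cases h : j ≤ i <;> simp [flipDown, del, h] <;> cases X j <;> rfl
  · rintro (⟨i, hp⟩ | ⟨i, hi, hp⟩)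
    · have hZ : ∀ j, Z j = xor (eps i j) (X j) := by
        intro j
        have h := xor_shift' (congrFun hp j)
        rw [h]
      refine ⟨?_, Or.inl ⟨i, ?_⟩⟩
      · intro heq
        have := hZ i
        rw [← heq] at this
        simp [eps] at this
      · funext j
        rw [hZ j]
        by_cases h : j = i <;> simp [flipBit, eps, h] <;> cases X j <;> rfl
    · have hZ : ∀ j, Z j = xor (del i j) (X j) := by
        intro j
        have h := xor_shift' (congrFun hp j)
        rw [h]
      refine ⟨?_, Or.inr ⟨i, hi, ?_⟩⟩
      · intro heq
        have := hZ i
        rw [← heq] at this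
        simp [del] at this
      · funext j
        rw [hZ j]
        by_cases h : j ≤ i <;> simp [flipDown, del, h] <;> cases X j <;> rfl

end AQaux

/-- For every `n ≥ 3`, any two distinct vertices of `AQ_n` have at most four common
neighbors. -/
theorem augCube_common_neighbors_le_four (n : ℕ) (hn : 3 ≤ n) (X Y : Fin n → Bool)
    (hne : X ≠ Y) :
    {Z | (augCube n).Adj X Z ∧ (augCube n).Adj Y Z}.ncard ≤ 4 := by
  classical
  open AQaux in
  set D : Fin n → Bool := fun j => xor (X j) (Y j) with hD
  have hne' : ∃ j, D j = true := by
    by_contra h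
    push_neg at h
    apply hne
    funext j
    have := h j
    simp only [hD] at this
    cases hx : X j <;> cases hy : Y j <;> simp_all
  obtain ⟨j0, hj0⟩ := hne'
  have hs : (Finset.univ.filter fun j => D j = true).Nonempty := ⟨j0, by simp [hj0]⟩
  set m := (Finset.univ.filter fun j => D j = true).max' hs with hm_def
  have hm : D m = true := by
    have := (Finset.univ.filter fun j => D j = true).max'_mem hs
    simpa using this
  have hmax : ∀ j, D j = true → j ≤ m := fun j hj =>
    Finset.le_max' _ j (by simp [hj])
  have hinj : Function.Injective (fun (p : Fin n → Bool) => fun j => xor (p j) (X j)) := by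
    intro p q h
    funext j
    have := congrFun h j
    cases hx : X j <;> cases hp : p j <;> cases hq : q j <;> simp_all
  have himg : {Z | (augCube n).Adj X Z ∧ (augCube n).Adj Y Z}
      = (fun (p : Fin n → Bool) => fun j => xor (p j) (X j)) ''
        {p | AQaux.Spat p ∧ AQaux.Spat (fun j => xor (p j) (D j))} := by
    ext Z
    simp only [Set.mem_setOf_eq, Set.mem_image]
    constructor
    · rintro ⟨h1, h2⟩
      refine ⟨fun j => xor (Z j) (X j), ⟨(AQaux.adj_iff X Z).mp h1, ?_⟩, ?_⟩
      · have he : (fun j => xor (xor (Z j) (X j)) (D j)) = fun j => xor (Z j) (Y j) := by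
          funext j
          simp only [hD]
          cases Z j <;> cases X j <;> cases Y j <;> rfl
        rw [he]
        exact (AQaux.adj_iff Y Z).mp h2
      · funext j
        show xor (xor (Z j) (X j)) (X j) = Z j
        cases Z j <;> cases X j <;> rfl
    · rintro ⟨p, ⟨hp1, hp2⟩, rfl⟩
      constructor
      · apply (AQaux.adj_iff X _).mpr
        have he : (fun j => xor (xor (p j) (X j)) (X j)) = p := by
          funext j; cases p j <;> cases X j <;> rfl
        simpa [he] using hp1
      · apply (AQaux.adj_iff Y _).mpr
        have he : (fun j => xor (xor (p j) (X j)) (Y j)) = fun j => xor (p j) (D j) := by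
          funext j
          simp only [hD]
          cases p j <;> cases X j <;> cases Y j <;> rfl
        simpa [he] using hp2
  rw [himg, Set.ncard_image_of_injective _ hinj]
  exact AQaux.main_s8 hn D m hm hmax
end
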